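/- arXiv:2503.04591 — 6 statements merged into one kernel-verified Lean document; each statement's English description precedes it below -/
import Mathlib

section
/- For any two block-parallel update schedules μ, μ' ∈ BP_n, the following are equivalent: (i) μ ≡_⋆ μ', i.e., φ(μ) = σ^i(φ(μ')) for some cyclic shift i ∈ {0,…,|φ(μ')|−1}; (ii) for every automata network f of size n over arbitrary finite nonempty alphabets X_0,…,X_{n−1} (f : X → X on X = ∏_i X_i, given componentwise), the restrictions of f^{⟨μ⟩} and f^{⟨μ'⟩} to their respective limit sets are isomorphic, i.e., there is a bijection π : Ω_{f^{⟨μ⟩}} → Ω_{f^{⟨μ'⟩}} such that π ∘ f^{⟨μ⟩} = f^{⟨μ'⟩} ∘ π on Ω_{f^{⟨μ⟩}}. -/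
open Finset Nat

/-- `μ` is a block-parallel update schedule (partitioned order) of size `n`:
a finite set of nonempty lists (o-blocks) of elements of `Fin n` such that
every element of `Fin n` occurs exactly once in exactly one o-block. -/
def IsBP (n : ℕ) (μ : Finset (List (Fin n))) : Prop :=
  (∀ S ∈ μ, S ≠ []) ∧ ∀ i : Fin n, (μ.sum fun S => S.count i) = 1

/-- The number of substeps `ℓ = lcm` of the o-block lengths. -/
def bpLen {n : ℕ} (μ : Finset (List (Fin n))) : ℕ := μ.lcm List.length

/-- The block updated at substep `t`: `W_t = { S[t mod |S|] : S ∈ μ }`. -/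
def blockAt {n : ℕ} (μ : Finset (List (Fin n))) (t : ℕ) : Finset (Fin n) :=
  μ.biUnion fun S => (S[t % S.length]?).toFinset

/-- `φ(μ)`: the rewriting of a block-parallel update schedule as a sequence of blocks. -/
def phiBP {n : ℕ} (μ : Finset (List (Fin n))) : List (Finset (Fin n)) :=
  (List.range (bpLen μ)).map (blockAt μ)

/-- Update of the automata in block `W`, over arbitrary alphabets `X i`. -/
def blockUpdateG {n : ℕ} {X : Fin n → Type} (f : ∀ i, (∀ j, X j) → X i)
    (W : Finset (Fin n)) (x : ∀ j, X j) : ∀ j, X j :=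
  fun i => if i ∈ W then f i x else x i

/-- Sequential application of a list of block updates (leftmost block first). -/
def seqUpdateG {n : ℕ} {X : Fin n → Type} (f : ∀ i, (∀ j, X j) → X i)
    (Ws : List (Finset (Fin n))) (x : ∀ j, X j) : ∀ j, X j :=
  Ws.foldl (fun y W => blockUpdateG f W y) x

/-- The block-parallel dynamics `f^⟨μ⟩ = f^{(W_{ℓ−1})} ∘ ⋯ ∘ f^{(W_0)}`. -/
def bpUpdateG {n : ℕ} {X : Fin n → Type} (f : ∀ i, (∀ j, X j) → X i)
    (μ : Finset (List (Fin n))) : (∀ j, X j) → (∀ j, X j) :=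
  seqUpdateG f (phiBP μ)

/-- The limit set `Ω_g = ⋂_{t ∈ ℕ} g^t(X)` of `g : X → X`. -/
def limitSet {Y : Type} (g : Y → Y) : Set Y :=
  ⋂ t : ℕ, Set.range g^[t]

section LimitSet

variable {Y : Type} (g : Y → Y)

lemma range_iterate_anti {a b : ℕ} (h : a ≤ b) :
    Set.range g^[b] ⊆ Set.range g^[a] := by
  rintro x ⟨y, rfl⟩
  refine ⟨g^[b - a] y, ?_⟩
  rw [← Function.iterate_add_apply]
  congr 1
  omega

lemma limitSet_subset (t : ℕ) : limitSet g ⊆ Set.range g^[t] :=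
  Set.iInter_subset _ t

lemma exists_stab [Finite Y] :
    ∃ N, ∀ m, N ≤ m → Set.range g^[m] = limitSet g := by
  have hne : (Set.range fun m => (Set.range g^[m]).ncard).Nonempty := ⟨_, 0, rfl⟩
  obtain ⟨N, hN⟩ := Nat.sInf_mem hne
  have hN' : (Set.range g^[N]).ncard = sInf (Set.range fun m => (Set.range g^[m]).ncard) := hN
  have hstab : ∀ m, N ≤ m → Set.range g^[m] = Set.range g^[N] := by
    intro m hm
    refine Set.eq_of_subset_of_ncard_le (range_iterate_anti g hm) ?_ (Set.toFinite _)
    rw [hN']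
    exact Nat.sInf_le ⟨m, rfl⟩
  have hlim : limitSet g = Set.range g^[N] := by
    apply Set.Subset.antisymm (limitSet_subset g N)
    intro x hx
    refine Set.mem_iInter.2 fun t => ?_
    rcases le_total t N with h | h
    · exact range_iterate_anti g h hx
    · rw [hstab t h]; exact hx
  exact ⟨N, fun m hm => by rw [hstab m hm, hlim]⟩

lemma image_limitSet [Finite Y] : g '' limitSet g = limitSet g := by
  obtain ⟨N, hN⟩ := exists_stab g
  calc g '' limitSet g = g '' Set.range g^[N] := by rw [hN N le_rfl]
    _ = Set.range g^[N + 1] := by rw [Function.iterate_succ', Set.range_comp]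
    _ = limitSet g := hN _ (Nat.le_succ N)

lemma mapsTo_limitSet [Finite Y] : Set.MapsTo g (limitSet g) (limitSet g) := by
  intro x hx
  rw [← image_limitSet g]
  exact ⟨x, hx, rfl⟩

lemma iterate_mem_limitSet [Finite Y] {x : Y} (hx : x ∈ limitSet g) (m : ℕ) :
    g^[m] x ∈ limitSet g := by
  induction m with
  | zero => exact hx
  | succ m ih => rw [Function.iterate_succ_apply']; exact mapsTo_limitSet g ih

lemma injOn_limitSet [Finite Y] : Set.InjOn g (limitSet g) := by
  intro a ha b hb hab
  by_contra hne
  have h1 : g '' (limitSet g \ {b}) = limitSet g := by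
    apply Set.Subset.antisymm
    · rintro y ⟨z, hz, rfl⟩
      exact mapsTo_limitSet g hz.1
    · intro y hy
      have hy' : y ∈ g '' limitSet g := by rw [image_limitSet g]; exact hy
      obtain ⟨z, hz, rfl⟩ := hy'
      by_cases hzb : z = b
      · exact ⟨a, ⟨ha, fun h => hne (h : a = b)⟩, by rw [hab, hzb]⟩
      · exact ⟨z, ⟨hz, hzb⟩, rfl⟩
  have h2 : (limitSet g).ncard ≤ (limitSet g \ {b}).ncard := by
    calc (limitSet g).ncard = (g '' (limitSet g \ {b})).ncard := by rw [h1]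
      _ ≤ (limitSet g \ {b}).ncard := Set.ncard_image_le (Set.toFinite _)
  have h3 : (limitSet g \ {b}).ncard < (limitSet g).ncard :=
    Set.ncard_diff_singleton_lt_of_mem hb (Set.toFinite _)
  omega

lemma periodic_mem_limitSet {x : Y} {P : ℕ} (hP : 1 ≤ P) (hx : g^[P] x = x) :
    x ∈ limitSet g := by
  refine Set.mem_iInter.2 fun t => ?_
  have hiter : ∀ m, g^[P * m] x = x := by
    intro m
    induction m with
    | zero => simp
    | succ m ih => rw [Nat.mul_succ, Function.iterate_add_apply, hx, ih]
  refine ⟨g^[P * t - t] x, ?_⟩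
  rw [← Function.iterate_add_apply]
  have : t + (P * t - t) = P * t := by
    have := Nat.le_mul_of_pos_left t hP
    omega
  rw [this, hiter]

lemma ne_fixed_of_limit [Finite Y] {b x : Y} (hfix : g b = b) (hx : x ∈ limitSet g)
    (hxb : x ≠ b) : ∀ m, g^[m] x ≠ b := by
  have hbmem : b ∈ limitSet g := periodic_mem_limitSet g le_rfl (by simpa using hfix)
  intro m
  induction m with
  | zero => exact hxb
  | succ m ih =>
    rw [Function.iterate_succ_apply']
    intro h
    exact ih (injOn_limitSet g (iterate_mem_limitSet g hx m) hbmem (by rw [h, hfix]))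

lemma iterate_comp_swap (u v : Y → Y) (t : ℕ) (x : Y) :
    (u ∘ v)^[t] (u x) = u ((v ∘ u)^[t] x) := by
  induction t generalizing x with
  | zero => rfl
  | succ t ih =>
    rw [Function.iterate_succ_apply, Function.iterate_succ_apply]
    exact ih (v (u x))

lemma bijOn_cross [Finite Y] (u v : Y → Y) :
    Set.BijOn u (limitSet (v ∘ u)) (limitSet (u ∘ v)) := by
  obtain ⟨N₁, hN₁⟩ := exists_stab (v ∘ u)
  obtain ⟨N₂, hN₂⟩ := exists_stab (u ∘ v)
  refine ⟨?_, ?_, ?_⟩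
  · intro x hx
    refine Set.mem_iInter.2 fun t => ?_
    have := limitSet_subset (v ∘ u) t hx
    obtain ⟨y, hy⟩ := this
    exact ⟨u y, by rw [iterate_comp_swap, hy]⟩
  · intro a ha b hb hab
    have h1 : (v ∘ u) a = (v ∘ u) b := by simp only [Function.comp_apply, hab]
    exact injOn_limitSet (v ∘ u) ha hb h1
  · intro y hy
    set N := max N₁ N₂ with hN
    have hy' : y ∈ Set.range (u ∘ v)^[N + 1] := by
      rw [hN₂ (N + 1) (by omega)]; exact hy
    obtain ⟨z, hz⟩ := hy'
    refine ⟨(v ∘ u)^[N] (v z), ?_, ?_⟩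
    · rw [← hN₁ N (by omega)]; exact ⟨v z, rfl⟩
    · rw [← iterate_comp_swap u v N (v z)]
      rw [← hz, Function.iterate_succ_apply]
      rfl

end LimitSet

-- Forward direction
lemma forward_dir {n : ℕ} (μ μ' : Finset (List (Fin n))) (i : ℕ)
    (h : phiBP μ = (phiBP μ').rotate i) (X : Fin n → Type) (hF : ∀ i, Fintype (X i))
    (f : ∀ i : Fin n, (∀ j, X j) → X i) :
    ∃ π : (∀ j, X j) → (∀ j, X j),
      Set.BijOn π (limitSet (bpUpdateG f μ)) (limitSet (bpUpdateG f μ')) ∧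
      ∀ x ∈ limitSet (bpUpdateG f μ),
        π (bpUpdateG f μ x) = bpUpdateG f μ' (π x) := by
  haveI : ∀ i, Fintype (X i) := hF
  haveI : Finite (∀ j, X j) := inferInstance
  by_cases hL : (phiBP μ').length = 0
  · rw [List.length_eq_zero_iff] at hL
    have h2 : phiBP μ = [] := by rw [h, hL, List.rotate_nil]
    refine ⟨id, ?_, ?_⟩
    · have : bpUpdateG f μ = bpUpdateG f μ' := by
        unfold bpUpdateG; rw [h2, hL]
      rw [this]
      exact ⟨fun x hx => hx, fun a _ b _ hab => hab, fun y hy => ⟨y, hy, rfl⟩⟩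
    · intro x _
      have : bpUpdateG f μ = bpUpdateG f μ' := by
        unfold bpUpdateG; rw [h2, hL]
      rw [this]; rfl
  · set k := i % (phiBP μ').length with hk
    have hklt : k ≤ (phiBP μ').length := le_of_lt (Nat.mod_lt _ (Nat.pos_of_ne_zero hL))
    have hrot : (phiBP μ').rotate i = (phiBP μ').drop k ++ (phiBP μ').take k := by
      rw [← List.rotate_mod, ← hk, List.rotate_eq_drop_append_take hklt]
    have hsplit : phiBP μ' = (phiBP μ').take k ++ (phiBP μ').drop k :=
      (List.take_append_drop k _).symm
    set u : (∀ j, X j) → (∀ j, X j) := seqUpdateG f ((phiBP μ').take k) with hu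
    set w : (∀ j, X j) → (∀ j, X j) := seqUpdateG f ((phiBP μ').drop k) with hw
    have hseq : ∀ (A B : List (Finset (Fin n))) (x : ∀ j, X j),
        seqUpdateG f (A ++ B) x = seqUpdateG f B (seqUpdateG f A x) := by
      intro A B x
      unfold seqUpdateG
      rw [List.foldl_append]
    have hG : bpUpdateG f μ = u ∘ w := by
      funext x
      unfold bpUpdateG
      rw [h, hrot, hseq]
      rfl
    have hG' : bpUpdateG f μ' = w ∘ u := by
      funext x
      unfold bpUpdateG
      conv_lhs => rw [hsplit]
      rw [hseq]
      rfl
    refine ⟨w, ?_, ?_⟩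
    · rw [hG, hG']
      exact bijOn_cross w u
    · intro x _
      rw [hG, hG']
      rfl

-- Extraction of (d, q) data from IsBP
lemma unique_pos_of_count_one {α : Type*} [DecidableEq α] (l : List α) (a : α)
    (h1 : l.count a = 1) : ∀ k (hk : k < l.length), l[k] = a → k = l.idxOf a := by
  induction l with
  | nil => intro k hk; simp at hk
  | cons x xs ih =>
    intro k hk ha
    cases k with
    | zero =>
      simp only [List.getElem_cons_zero] at ha
      rw [ha, List.idxOf_cons_self]
    | succ k =>
      simp only [List.getElem_cons_succ] at ha
      have hk' : k < xs.length := by simpa using hk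
      have hmem : a ∈ xs := ha ▸ List.getElem_mem hk'
      by_cases hxa : x = a
      · exfalso
        rw [List.count_cons, if_pos (by simp [hxa])] at h1
        have : xs.count a = 0 := by omega
        rw [List.count_eq_zero] at this
        exact this hmem
      · have h1' : xs.count a = 1 := by
          rw [List.count_cons, if_neg (by simp [hxa])] at h1; omega
        rw [List.idxOf_cons_ne _ (fun h => hxa h)]
        rw [ih h1' k hk' ha]

lemma isbp_block_data {n : ℕ} {ν : Finset (List (Fin n))} (hν : IsBP n ν) (i : Fin n) :
    ∃ S, S ∈ ν ∧ i ∈ S ∧ S.count i = 1 ∧ ∀ S' ∈ ν, i ∈ S' → S' = S := by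
  have hsum := hν.2 i
  have hex : ∃ S ∈ ν, S.count i ≠ 0 := by
    by_contra h
    push_neg at h
    rw [Finset.sum_eq_zero (fun S hS => h S hS)] at hsum
    exact absurd hsum (by omega)
  obtain ⟨S, hS, hcount⟩ := hex
  have hle : S.count i ≤ 1 := by
    rw [← hsum]
    exact Finset.single_le_sum (fun _ _ => Nat.zero_le _) hS
  have hone : S.count i = 1 := by omega
  refine ⟨S, hS, List.count_pos_iff.1 (by omega), hone, ?_⟩
  intro S' hS' hiS'
  by_contra hne
  have hpair : ({S, S'} : Finset (List (Fin n))) ⊆ ν := by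
    intro T hT
    simp only [Finset.mem_insert, Finset.mem_singleton] at hT
    rcases hT with rfl | rfl <;> assumption
  have h2 : (({S, S'} : Finset (List (Fin n))).sum fun T => T.count i) ≤ 1 := by
    rw [← hsum]
    exact Finset.sum_le_sum_of_subset hpair
  rw [Finset.sum_insert (by simpa using (fun h => hne h.symm)), Finset.sum_singleton] at h2
  have : 0 < S'.count i := List.count_pos_iff.2 hiS'
  omega

lemma bpLen_pos {n : ℕ} {ν : Finset (List (Fin n))} (hν : IsBP n ν) : 0 < bpLen ν := by
  rw [Nat.pos_iff_ne_zero]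
  intro h
  rw [bpLen, Finset.lcm_eq_zero_iff] at h
  obtain ⟨S, hS, hlen⟩ := h
  exact hν.1 S (Finset.mem_coe.1 hS) (List.length_eq_zero_iff.1 hlen)

lemma mem_blockAt_iff {n : ℕ} {ν : Finset (List (Fin n))} {i : Fin n} {t : ℕ} :
    i ∈ blockAt ν t ↔ ∃ S ∈ ν, S[t % S.length]? = some i := by
  unfold blockAt
  simp only [Finset.mem_biUnion, Option.mem_toFinset, Option.mem_def]

lemma isbp_full {n : ℕ} {ν : Finset (List (Fin n))} (hν : IsBP n ν) :
    ∃ d q : Fin n → ℕ,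
      (∀ i, 0 < d i) ∧ (∀ i, q i < d i) ∧ (∀ i, d i ∣ bpLen ν) ∧
      (∀ i t, i ∈ blockAt ν t ↔ t % d i = q i) ∧
      bpLen ν = (Finset.univ : Finset (Fin n)).lcm d := by
  choose S hSmem hiS hcount huniq using isbp_block_data hν
  refine ⟨fun i => (S i).length, fun i => (S i).idxOf i, ?_, ?_, ?_, ?_, ?_⟩
  · intro i
    exact List.length_pos_iff.2 (List.ne_nil_of_mem (hiS i))
  · intro i
    exact List.idxOf_lt_length_iff.2 (hiS i)
  · intro i
    exact Finset.dvd_lcm (hSmem i)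
  · intro i t
    show i ∈ blockAt ν t ↔ t % (S i).length = (S i).idxOf i
    rw [mem_blockAt_iff]
    constructor
    · rintro ⟨T, hT, hTi⟩
      rw [List.getElem?_eq_some_iff] at hTi
      obtain ⟨hlt, hget⟩ := hTi
      have hmem : i ∈ T := hget ▸ List.getElem_mem hlt
      have hTS : T = S i := huniq i T hT hmem
      subst hTS
      exact unique_pos_of_count_one _ _ (hcount i) _ hlt hget
    · intro ht
      refine ⟨S i, hSmem i, ?_⟩
      have hlt : (S i).idxOf i < (S i).length := List.idxOf_lt_length_iff.2 (hiS i)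
      rw [ht, List.getElem?_eq_getElem hlt, List.getElem_idxOf hlt]
  · apply Nat.dvd_antisymm
    · apply Finset.lcm_dvd
      intro T hT
      have hTne : T ≠ [] := hν.1 T hT
      have hmem : T.head hTne ∈ T := List.head_mem hTne
      have := huniq (T.head hTne) T hT hmem
      rw [this]
      exact Finset.dvd_lcm (Finset.mem_univ _)
    · apply Finset.lcm_dvd
      intro i _
      exact Finset.dvd_lcm (hSmem i)

lemma blockAt_congr {n : ℕ} {ν : Finset (List (Fin n))} {t t' : ℕ}
    (h : t % bpLen ν = t' % bpLen ν) : blockAt ν t = blockAt ν t' := by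
  unfold blockAt
  apply Finset.biUnion_congr rfl
  intro S hS
  have hdvd : S.length ∣ bpLen ν := Finset.dvd_lcm hS
  have : t % S.length = t' % S.length := by
    rw [← Nat.mod_mod_of_dvd t hdvd, ← Nat.mod_mod_of_dvd t' hdvd, h]
  rw [this]

lemma blockAt_nonempty {n : ℕ} (hn : 1 ≤ n) {ν : Finset (List (Fin n))} (hν : IsBP n ν)
    (t : ℕ) : ∃ j, j ∈ blockAt ν t := by
  obtain ⟨S, hS, hiS, _, _⟩ := isbp_block_data hν ⟨0, hn⟩
  have hlen : 0 < S.length := List.length_pos_iff.2 (List.ne_nil_of_mem hiS)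
  have hlt : t % S.length < S.length := Nat.mod_lt _ hlen
  refine ⟨S[t % S.length], mem_blockAt_iff.2 ⟨S, hS, List.getElem?_eq_getElem hlt⟩⟩
-- Arithmetic toolkit for the checker network
section Toolkit

variable {n : ℕ} (d p : Fin n → ℕ)

def occC (j : Fin n) (t : ℕ) : Prop := t % d j = p j

noncomputable def nextNC (j : Fin n) (w : ℕ) : ℕ := (w + 1) + sInf {m | occC d p j (w + 1 + m)}

noncomputable def lastNC (j : Fin n) (v : ℕ) : ℕ := v - 1 - sInf {m | occC d p j (v - 1 - m)}

variable {d p}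

lemma occ_exists_ge {j : Fin n} (hd : 0 < d j) (hp : p j < d j) (w : ℕ) :
    ∃ m, m < d j ∧ occC d p j (w + m) := by
  have hdm := Nat.div_add_mod w (d j)
  have hml := Nat.mod_lt w hd
  rcases le_or_gt (w % d j) (p j) with h | h
  · refine ⟨p j - w % d j, by omega, ?_⟩
    have : w + (p j - w % d j) = p j + d j * (w / d j) := by omega
    rw [occC, this, Nat.add_mul_mod_self_left, Nat.mod_eq_of_lt hp]
  · refine ⟨p j + d j - w % d j, by omega, ?_⟩
    have he : d j * (w / d j + 1) = d j * (w / d j) + d j := by ring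
    have : w + (p j + d j - w % d j) = p j + d j * (w / d j + 1) := by omega
    rw [occC, this, Nat.add_mul_mod_self_left, Nat.mod_eq_of_lt hp]

lemma nextN_spec {j : Fin n} (hd : 0 < d j) (hp : p j < d j) (w : ℕ) :
    w < nextNC d p j w ∧ nextNC d p j w ≤ w + d j ∧ occC d p j (nextNC d p j w) ∧
      ∀ t, w < t → t < nextNC d p j w → ¬ occC d p j t := by
  obtain ⟨m₀, hm₀lt, hm₀⟩ := occ_exists_ge hd hp (w + 1)
  have hne : {m | occC d p j (w + 1 + m)}.Nonempty := ⟨m₀, hm₀⟩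
  have hmem := Nat.sInf_mem hne
  have hle : sInf {m | occC d p j (w + 1 + m)} ≤ m₀ := Nat.sInf_le hm₀
  refine ⟨by unfold nextNC; omega, by unfold nextNC; omega, hmem, ?_⟩
  intro t hwt htn hocc
  have h1 : t - (w + 1) < sInf {m | occC d p j (w + 1 + m)} := by
    unfold nextNC at htn; omega
  have h2 := Nat.notMem_of_lt_sInf h1
  apply h2
  show occC d p j (w + 1 + (t - (w + 1)))
  have : w + 1 + (t - (w + 1)) = t := by omega
  rw [this]; exact hocc

lemma lastN_spec {j : Fin n} (hd : 0 < d j) (hp : p j < d j) {v : ℕ} (hv : d j ≤ v) :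
    lastNC d p j v < v ∧ v ≤ lastNC d p j v + d j ∧ occC d p j (lastNC d p j v) ∧
      ∀ t, lastNC d p j v < t → t < v → ¬ occC d p j t := by
  obtain ⟨m', hm'lt, hm'⟩ := occ_exists_ge hd hp (v - d j)
  have hkey : v - d j + m' = v - 1 - (d j - 1 - m') := by omega
  have hne : {m | occC d p j (v - 1 - m)}.Nonempty := by
    refine ⟨d j - 1 - m', ?_⟩
    show occC d p j (v - 1 - (d j - 1 - m'))
    rw [← hkey]; exact hm'
  have hmem := Nat.sInf_mem hne
  have hle : sInf {m | occC d p j (v - 1 - m)} ≤ d j - 1 - m' := Nat.sInf_le hne.choose_spec |> fun _ => Nat.sInf_le (by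
    show occC d p j (v - 1 - (d j - 1 - m'))
    rw [← hkey]; exact hm')
  refine ⟨by unfold lastNC; omega, by unfold lastNC; omega, hmem, ?_⟩
  intro t hlt htv hocc
  have h1 : v - 1 - t < sInf {m | occC d p j (v - 1 - m)} := by
    unfold lastNC at hlt; omega
  apply Nat.notMem_of_lt_sInf h1
  show occC d p j (v - 1 - (v - 1 - t))
  have : v - 1 - (v - 1 - t) = t := by omega
  rw [this]; exact hocc

lemma nextN_unique {j : Fin n} (hd : 0 < d j) (hp : p j < d j) {w o : ℕ}
    (ho : occC d p j o) (h1 : w < o) (h2 : ∀ t, w < t → t < o → ¬ occC d p j t) :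
    nextNC d p j w = o := by
  obtain ⟨ha, hb, hc, hmin⟩ := nextN_spec hd hp w
  rcases lt_trichotomy (nextNC d p j w) o with h | h | h
  · exact absurd hc (h2 _ ha h)
  · exact h
  · exact absurd ho (hmin _ h1 h)

lemma lastN_unique {j : Fin n} (hd : 0 < d j) (hp : p j < d j) {v o : ℕ} (hv : d j ≤ v)
    (ho : occC d p j o) (h1 : o < v) (h2 : ∀ t, o < t → t < v → ¬ occC d p j t) :
    lastNC d p j v = o := by
  obtain ⟨ha, hb, hc, hmin⟩ := lastN_spec hd hp hv
  rcases lt_trichotomy (lastNC d p j v) o with h | h | h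
  · exact absurd ho (hmin _ h h1)
  · exact h
  · exact absurd hc (h2 _ h ha)

lemma occ_add_dvd {j : Fin n} {c t : ℕ} (hdc : d j ∣ c) :
    occC d p j (t + c) ↔ occC d p j t := by
  obtain ⟨k, rfl⟩ := hdc
  unfold occC
  rw [Nat.add_mul_mod_self_left]

lemma nextN_add {j : Fin n} (hd : 0 < d j) (hp : p j < d j) {c : ℕ} (hdc : d j ∣ c)
    (w : ℕ) : nextNC d p j (w + c) = nextNC d p j w + c := by
  obtain ⟨ha, hb, hc, hmin⟩ := nextN_spec hd hp w
  apply nextN_unique hd hp ((occ_add_dvd hdc).2 hc) (by omega)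
  intro t h1 h2 hocc
  have ht : t = (t - c) + c := by omega
  rw [ht] at hocc
  exact hmin (t - c) (by omega) (by omega) ((occ_add_dvd hdc).1 hocc)

lemma lastN_add {j : Fin n} (hd : 0 < d j) (hp : p j < d j) {v c : ℕ} (hv : d j ≤ v)
    (hdc : d j ∣ c) : lastNC d p j (v + c) = lastNC d p j v + c := by
  obtain ⟨ha, hb, hc, hmin⟩ := lastN_spec hd hp hv
  apply lastN_unique hd hp (by omega) ((occ_add_dvd hdc).2 hc) (by omega)
  intro t h1 h2 hocc
  have ht : t = (t - c) + c := by omega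
  rw [ht] at hocc
  exact hmin (t - c) (by omega) (by omega) ((occ_add_dvd hdc).1 hocc)

lemma lastN_mod_congr {j : Fin n} (hd : 0 < d j) (hp : p j < d j) {K : ℕ} (hK : 0 < K)
    (hdK : d j ∣ K) {a b : ℕ} (ha : K ≤ a) (hb : K ≤ b) (hab : a % K = b % K) :
    lastNC d p j a % K = lastNC d p j b % K := by
  have hdj : d j ≤ K := Nat.le_of_dvd hK hdK
  have key : ∀ x y : ℕ, K ≤ x → K ≤ y → x % K = y % K → x ≤ y →
      lastNC d p j x % K = lastNC d p j y % K := by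
    intro x y hx hy hxy hle
    have hdvd : K ∣ y - x := (Nat.modEq_iff_dvd' hle).1 hxy
    obtain ⟨k, hk⟩ := hdvd
    have hKd : d j * (K / d j) = K := Nat.mul_div_cancel' hdK
    have hy' : y = x + d j * (K / d j * k) := by
      rw [← Nat.mul_assoc, hKd]
      omega
    rw [hy', lastN_add hd hp (by omega) ⟨_, rfl⟩]
    have h2 : d j * (K / d j * k) = K * k := by
      rw [← Nat.mul_assoc, hKd]
    rw [h2, Nat.add_mul_mod_self_left]
  rcases le_total a b with h | h
  · exact key a b ha hb hab h
  · exact (key b a hb ha hab.symm h).symm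

lemma nextN_mod_congr {j : Fin n} (hd : 0 < d j) (hp : p j < d j) {K : ℕ} (hK : 0 < K)
    (hdK : d j ∣ K) {a b : ℕ} (hab : a % K = b % K) :
    nextNC d p j a % K = nextNC d p j b % K := by
  have key : ∀ x y : ℕ, x % K = y % K → x ≤ y →
      nextNC d p j x % K = nextNC d p j y % K := by
    intro x y hxy hle
    have hdvd : K ∣ y - x := (Nat.modEq_iff_dvd' hle).1 hxy
    obtain ⟨k, hk⟩ := hdvd
    have hy' : y = x + K * k := by omega
    have hdKk : d j ∣ K * k := Dvd.dvd.mul_right hdK k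
    rw [hy', nextN_add hd hp hdKk, Nat.add_mul_mod_self_left]
  rcases le_total a b with h | h
  · exact key a b hab h
  · exact (key b a hab.symm h).symm

end Toolkit
-- The checker network and synchronization lemmas
section CheckerNet

variable {n : ℕ} {d p : Fin n → ℕ} {L K : ℕ}

noncomputable def checker (d p : Fin n → ℕ) (K : ℕ) (hK : 0 < K) :
    ∀ _ : Fin n, (∀ _ : Fin n, Option (Fin K)) → Option (Fin K) :=
  fun i x =>
    if h : ∀ j, (x j).isSome then
      if ∀ j, ((x j).get (h j)).val =
          lastNC d p j ((nextNC d p i (((x i).get (h i)).val) % K) + K) % K then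
        some ⟨nextNC d p i (((x i).get (h i)).val) % K, Nat.mod_lt _ hK⟩
      else none
    else none

variable (hd : ∀ j, 0 < d j) (hp : ∀ j, p j < d j) (hdL : ∀ j, d j ∣ L)
  (hLK : L ∣ K) (hL : 0 < L) (hKL : 2 * L ≤ K)
  (hcov : ∀ t : ℕ, ∃ j, occC d p j t)

include hd hp hdL hLK hL hKL

lemma hK0 : 0 < K := lt_of_lt_of_le (by omega) hKL

lemma hdK : ∀ j, d j ∣ K := fun j => (hdL j).trans hLK

lemma hdLe : ∀ j, d j ≤ L := fun j => Nat.le_of_dvd hL (hdL j)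

lemma lastN_ne_self_mod (j : Fin n) {a : ℕ} (ha : K ≤ a) :
    lastNC d p j a % K ≠ a % K := by
  have hda : d j ≤ a := le_trans (le_trans (hdLe hd hp hdL hLK hL hKL j) (by omega)) ha
  obtain ⟨h1, h2, _, _⟩ := lastN_spec (hd j) (hp j) hda
  intro heq
  have hdvd : K ∣ a - lastNC d p j a := (Nat.modEq_iff_dvd' (le_of_lt h1)).1 heq
  have hpos : 0 < a - lastNC d p j a := by omega
  have := Nat.le_of_dvd hpos hdvd
  have hdLe' := hdLe hd hp hdL hLK hL hKL j
  omega

include hcov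

lemma aux_no_occ {a b : ℕ} (ha : K ≤ a) (hab : a < b) (hba : b - a ≤ K - L)
    (hsync : ∀ j, lastNC d p j a % K = lastNC d p j b % K) : False := by
  obtain ⟨js, hjs⟩ := hcov a
  have hdLe' := hdLe hd hp hdL hLK hL hKL js
  have hda : d js ≤ a := by omega
  have hdb : d js ≤ b := by omega
  obtain ⟨ha1, ha2, ha3, ha4⟩ := lastN_spec (hd js) (hp js) hda
  obtain ⟨hb1, hb2, hb3, hb4⟩ := lastN_spec (hd js) (hp js) hdb
  set la := lastNC d p js a with hla
  set lb := lastNC d p js b with hlb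
  have heq : la = lb := by
    have hs := hsync js
    rcases le_total la lb with h | h
    · have hdvd : K ∣ lb - la := (Nat.modEq_iff_dvd' h).1 hs
      rcases Nat.eq_zero_or_pos (lb - la) with h0 | h0
      · omega
      · have := Nat.le_of_dvd h0 hdvd
        omega
    · have hdvd : K ∣ la - lb := (Nat.modEq_iff_dvd' h).1 hs.symm
      rcases Nat.eq_zero_or_pos (la - lb) with h0 | h0
      · omega
      · have := Nat.le_of_dvd h0 hdvd
        omega
  exact hb4 a (by omega) hab hjs

lemma sync_inj (hn : 1 ≤ n) {x y : ℕ} (hx : x < K) (hy : y < K)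
    (hsync : ∀ j, lastNC d p j (x + K) % K = lastNC d p j (y + K) % K) : x = y := by
  have hK' : 0 < K := hK0 hd hp hdL hLK hL hKL
  by_contra hne
  have key : ∀ x' y' : ℕ, x' < K → y' < K → x' < y' →
      (∀ j, lastNC d p j (x' + K) % K = lastNC d p j (y' + K) % K) → False := by
    intro x' y' hx' hy' hlt hsync'
    rcases le_or_gt (y' - x') (K - L) with hcase | hcase
    · exact aux_no_occ hd hp hdL hLK hL hKL hcov (a := x' + K) (b := y' + K)
        (by omega) (by omega) (by omega) hsync'
    · -- wrap-around: use a := y' + K, b := x' + 2K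
      refine aux_no_occ hd hp hdL hLK hL hKL hcov (a := y' + K) (b := x' + 2 * K)
        (by omega) (by omega) (by omega) ?_
      intro j
      have hcg : lastNC d p j (x' + 2 * K) % K = lastNC d p j (x' + K) % K := by
        apply lastN_mod_congr (hd j) (hp j) hK' (hdK hd hp hdL hLK hL hKL j)
          (by omega) (by omega)
        rw [show x' + 2 * K = x' + K * 2 by ring, Nat.add_mul_mod_self_left,
          show x' + K = x' + K * 1 by ring, Nat.add_mul_mod_self_left]
      rw [hcg, ← hsync' j]
  rcases lt_or_gt_of_ne hne with h | h
  · exact key x y hx hy h hsync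
  · exact key y x hy hx h (fun j => (hsync j).symm)

end CheckerNet
-- Run machinery
section Run

variable {n : ℕ} {X : Fin n → Type} (f : ∀ i, (∀ j, X j) → X i) (ν : Finset (List (Fin n)))

def runC (x : ∀ j, X j) : ℕ → ∀ j, X j
  | 0 => x
  | τ + 1 => blockUpdateG f (blockAt ν τ) (runC x τ)

lemma runC_add (x : ∀ j, X j) (τ₀ k : ℕ) :
    runC f ν x (τ₀ + k) =
      seqUpdateG f ((List.range k).map fun t => blockAt ν (τ₀ + t)) (runC f ν x τ₀) := by
  induction k with
  | zero => rfl
  | succ k ih =>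
    have : τ₀ + (k + 1) = (τ₀ + k) + 1 := by omega
    rw [this]
    show blockUpdateG f (blockAt ν (τ₀ + k)) (runC f ν x (τ₀ + k)) = _
    rw [ih, List.range_succ, List.map_append]
    unfold seqUpdateG
    rw [List.foldl_append]
    rfl

lemma runC_iterate (x : ∀ j, X j) (m : ℕ) :
    (bpUpdateG f ν)^[m] x = runC f ν x (m * bpLen ν) := by
  induction m with
  | zero => rw [Nat.zero_mul]; rfl
  | succ m ih =>
    rw [Function.iterate_succ_apply', ih]
    have h1 : (m + 1) * bpLen ν = m * bpLen ν + bpLen ν := by ring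
    rw [h1, runC_add]
    have h2 : ((List.range (bpLen ν)).map fun t => blockAt ν (m * bpLen ν + t)) =
        phiBP ν := by
      unfold phiBP
      apply List.map_congr_left
      intro t _
      apply blockAt_congr
      rw [show m * bpLen ν + t = t + bpLen ν * m by ring, Nat.add_mul_mod_self_left]
    rw [h2]
    rfl

end Run

-- The bottom configuration
section Bot

variable {n : ℕ} {d p : Fin n → ℕ} {K : ℕ} (hK : 0 < K)

def botC (n K : ℕ) : ∀ _ : Fin n, Option (Fin K) := fun _ => none

lemma checker_none {x : ∀ _ : Fin n, Option (Fin K)} {j₀ : Fin n} (h : x j₀ = none)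
    (i : Fin n) : checker d p K hK i x = none := by
  unfold checker
  rw [dif_neg]
  intro hall
  have := hall j₀
  rw [h] at this
  simp at this

lemma blockUpdate_bot (W : Finset (Fin n)) :
    blockUpdateG (checker d p K hK) W (botC n K) = botC n K := by
  funext i
  unfold blockUpdateG
  by_cases hi : i ∈ W
  · rw [if_pos hi]
    exact checker_none hK (rfl : botC n K i = none) i
  · rw [if_neg hi]

lemma seqUpdate_bot (Ws : List (Finset (Fin n))) :
    seqUpdateG (checker d p K hK) Ws (botC n K) = botC n K := by
  induction Ws with
  | nil => rfl
  | cons W Ws ih =>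
    show seqUpdateG _ Ws (blockUpdateG _ W (botC n K)) = botC n K
    rw [blockUpdate_bot, ih]

lemma bot_mem_limit (ν : Finset (List (Fin n))) :
    botC n K ∈ limitSet (bpUpdateG (checker d p K hK) ν) := by
  apply periodic_mem_limitSet _ (le_refl 1)
  show bpUpdateG (checker d p K hK) ν (botC n K) = botC n K
  exact seqUpdate_bot hK _

end Bot

-- The healthy configuration for μ'
section Healthy

variable {n : ℕ} {d p : Fin n → ℕ} {L K : ℕ}
variable (hd : ∀ j, 0 < d j) (hp : ∀ j, p j < d j) (hdL : ∀ j, d j ∣ L)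
  (hLK : L ∣ K) (hL : 0 < L) (hKL : 2 * L ≤ K)

noncomputable def lamC (d p : Fin n → ℕ) (K : ℕ) (hK : 0 < K) (τ : ℕ) :
    ∀ _ : Fin n, Option (Fin K) :=
  fun j => some ⟨lastNC d p j (τ + K) % K, Nat.mod_lt _ hK⟩

include hd hp hdL hLK hL hKL

lemma lam_step {μ' : Finset (List (Fin n))}
    (hchar : ∀ (j : Fin n) (t : ℕ), j ∈ blockAt μ' t ↔ occC d p j t) (τ : ℕ) :
    blockUpdateG (checker d p K (hK0 hd hp hdL hLK hL hKL))
      (blockAt μ' τ) (lamC d p K (hK0 hd hp hdL hLK hL hKL) τ) =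
      lamC d p K (hK0 hd hp hdL hLK hL hKL) (τ + 1) := by
  set hK := hK0 hd hp hdL hLK hL hKL with hKdef
  have hdK' : ∀ j, d j ∣ K := hdK hd hp hdL hLK hL hKL
  have hdLe' : ∀ j, d j ≤ L := hdLe hd hp hdL hLK hL hKL
  have hLleK : L ≤ K := by omega
  have hdleK : ∀ j, d j ≤ K := fun j => le_trans (hdLe' j) hLleK
  have hKpos : 0 < K := hK
  funext j
  unfold blockUpdateG
  by_cases hj : j ∈ blockAt μ' τ
  · rw [if_pos hj]
    have hocc : occC d p j (τ + K) := by
      rw [occ_add_dvd (hdK' j)]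
      exact (hchar j τ).1 hj
    have hall : ∀ j', ((lamC d p K hK τ) j').isSome := fun j' => rfl
    unfold checker
    rw [dif_pos hall]
    have hu : ∀ j', (((lamC d p K hK τ) j').get (hall j')).val =
        lastNC d p j' (τ + K) % K := fun j' => rfl
    have hlast := lastN_spec (hd j) (hp j)
      (show d j ≤ τ + K from le_trans (hdleK j) (by omega))
    have hnl : nextNC d p j (lastNC d p j (τ + K)) = τ + K := by
      apply nextN_unique (hd j) (hp j) hocc hlast.1
      intro t h1 h2
      exact hlast.2.2.2 t h1 (by omega)
    have hmm : ∀ a : ℕ, a % K % K = a % K := fun a => Nat.mod_mod_of_dvd a (dvd_refl K)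
    have hvraw : nextNC d p j ((((lamC d p K hK τ) j).get (hall j)).val) % K = τ % K := by
      rw [hu]
      rw [nextN_mod_congr (hd j) (hp j) hKpos (hdK' j)
        (a := lastNC d p j (τ + K) % K) (b := lastNC d p j (τ + K)) (hmm _)]
      rw [hnl, Nat.add_mod_right]
    have hcond : ∀ j', (((lamC d p K hK τ) j').get (hall j')).val =
        lastNC d p j' ((nextNC d p j ((((lamC d p K hK τ) j).get (hall j)).val) % K) + K) % K := by
      intro j'
      rw [hu, hvraw]
      apply (lastN_mod_congr (hd j') (hp j') hKpos (hdK' j')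
        (a := τ % K + K) (b := τ + K) (by omega) (by omega) ?_).symm
      rw [Nat.add_mod_right, Nat.add_mod_right, hmm]
    rw [if_pos hcond]
    have hlnew : lastNC d p j (τ + 1 + K) = τ + K := by
      apply lastN_unique (hd j) (hp j) (le_trans (hdleK j) (by omega)) hocc (by omega)
      intro t h1 h2 hocc'
      omega
    show some _ = some _
    apply congrArg some
    apply Fin.ext
    show nextNC d p j ((((lamC d p K hK τ) j).get (hall j)).val) % K =
      lastNC d p j (τ + 1 + K) % K
    rw [hvraw, hlnew, Nat.add_mod_right]
  · rw [if_neg hj]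
    have hnocc : ¬ occC d p j (τ + K) := by
      rw [occ_add_dvd (hdK' j)]
      exact fun h => hj ((hchar j τ).2 h)
    have hlast := lastN_spec (hd j) (hp j)
      (show d j ≤ τ + K from le_trans (hdleK j) (by omega))
    have heq : lastNC d p j (τ + 1 + K) = lastNC d p j (τ + K) := by
      apply lastN_unique (hd j) (hp j) (le_trans (hdleK j) (by omega)) hlast.2.2.1 (by omega)
      intro t h1 h2
      rcases Nat.lt_or_ge t (τ + K) with h | h
      · exact hlast.2.2.2 t h1 h
      · have ht : t = τ + K := by omega
        rw [ht]; exact hnocc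
    show lamC d p K hK τ j = lamC d p K hK (τ + 1) j
    unfold lamC
    congr 2
    rw [heq]

lemma lam_run {μ' : Finset (List (Fin n))}
    (hchar : ∀ (j : Fin n) (t : ℕ), j ∈ blockAt μ' t ↔ occC d p j t) (τ : ℕ) :
    runC (checker d p K (hK0 hd hp hdL hLK hL hKL)) μ'
      (lamC d p K (hK0 hd hp hdL hLK hL hKL) 0) τ =
      lamC d p K (hK0 hd hp hdL hLK hL hKL) τ := by
  induction τ with
  | zero => rfl
  | succ τ ih =>
    show blockUpdateG _ (blockAt μ' τ) _ = _
    rw [ih]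
    exact lam_step hd hp hdL hLK hL hKL hchar τ

lemma lam_mem_limit {μ' : Finset (List (Fin n))}
    (hchar : ∀ (j : Fin n) (t : ℕ), j ∈ blockAt μ' t ↔ occC d p j t)
    (hLdef : bpLen μ' = L) :
    lamC d p K (hK0 hd hp hdL hLK hL hKL) 0 ∈
      limitSet (bpUpdateG (checker d p K (hK0 hd hp hdL hLK hL hKL)) μ') := by
  set hK := hK0 hd hp hdL hLK hL hKL
  have hdLe' : ∀ j, d j ≤ L := hdLe hd hp hdL hLK hL hKL
  have hdK' : ∀ j, d j ∣ K := hdK hd hp hdL hLK hL hKL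
  obtain ⟨m, hm⟩ := id hLK
  have hm1 : 1 ≤ m := by
    rcases Nat.eq_zero_or_pos m with h | h
    · subst h; simp at hm; omega
    · exact h
  apply periodic_mem_limitSet _ hm1
  rw [runC_iterate, hLdef, show m * L = K from by rw [Nat.mul_comm]; omega,
    lam_run hd hp hdL hLK hL hKL hchar]
  funext j
  unfold lamC
  apply congrArg some
  apply Fin.ext
  show lastNC d p j (K + K) % K = lastNC d p j (0 + K) % K
  have h1 : K + K = 0 + K + K * 1 := by ring
  rw [h1, lastN_add (hd j) (hp j) (show d j ≤ 0 + K from le_trans (hdLe' j) (by omega))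
    (Dvd.dvd.mul_right (hdK' j) 1), show K * 1 = K by ring, Nat.add_mod_right]

end Healthy
-- Survival: along the run from a non-bot limit point, everything stays some
section Survival

variable {n : ℕ} {d p : Fin n → ℕ} {K : ℕ} (hK : 0 < K)

lemma bp_bot_fixed (ν : Finset (List (Fin n))) :
    bpUpdateG (checker d p K hK) ν (botC n K) = botC n K := seqUpdate_bot hK _

lemma survival {μ : Finset (List (Fin n))} (hμ : IsBP n μ)
    {x : ∀ _ : Fin n, Option (Fin K)}
    (hx1 : x ∈ limitSet (bpUpdateG (checker d p K hK) μ)) (hx2 : x ≠ botC n K) :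
    ∀ τ j, (runC (checker d p K hK) μ x τ j).isSome := by
  set f := checker d p K hK with hf
  set c := runC f μ x with hc
  have hFiter : ∀ m, (bpUpdateG f μ)^[m] x ≠ botC n K :=
    ne_fixed_of_limit _ (bp_bot_fixed hK μ) hx1 hx2
  by_contra hcon
  push_neg at hcon
  obtain ⟨τ, j, hj⟩ := hcon
  have hjn : c τ j = none := by
    cases hcase : c τ j with
    | none => rfl
    | some val => exact absurd (by rw [hcase]; rfl) hj
  have persist : ∀ (i : Fin n) σ, c σ i = none → ∀ σ', σ ≤ σ' → c σ' i = none := by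
    intro i σ h σ' hle
    induction σ' with
    | zero =>
      have : σ = 0 := by omega
      rw [← this]; exact h
    | succ σ' ih =>
      rcases Nat.lt_or_ge σ (σ' + 1) with hlt | hge
      · have hσ' : σ ≤ σ' := by omega
        have hprev : c σ' i = none := ih hσ'
        show blockUpdateG f (blockAt μ σ') (c σ') i = none
        unfold blockUpdateG
        by_cases hiW : i ∈ blockAt μ σ'
        · rw [if_pos hiW]
          exact checker_none hK hprev i
        · rw [if_neg hiW]; exact hprev
      · have : σ = σ' + 1 := by omega
        rw [← this]; exact h
  obtain ⟨D, P, hD, hP, hDl, hDchar, _⟩ := isbp_full hμ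
  set ℓ := bpLen μ with hℓdef
  have hℓ : 0 < ℓ := bpLen_pos hμ
  have hdie : ∀ i, c (τ + ℓ) i = none := by
    intro i
    obtain ⟨m, hmlt, hmocc⟩ := occ_exists_ge (d := D) (p := P) (hD i) (hP i) τ
    have hDle : D i ≤ ℓ := Nat.le_of_dvd hℓ (hDl i)
    have hiW : i ∈ blockAt μ (τ + m) := (hDchar i (τ + m)).2 hmocc
    have hnone : c (τ + m + 1) i = none := by
      show blockUpdateG f (blockAt μ (τ + m)) (c (τ + m)) i = none
      unfold blockUpdateG
      rw [if_pos hiW]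
      exact checker_none hK (persist j τ hjn (τ + m) (by omega)) i
    exact persist i (τ + m + 1) hnone (τ + ℓ) (by omega)
  have hbot : ∀ σ, τ + ℓ ≤ σ → c σ = botC n K := by
    intro σ hσ
    funext i
    exact persist i (τ + ℓ) (hdie i) σ hσ
  have hcontra := hFiter (τ + ℓ)
  apply hcontra
  rw [runC_iterate]
  exact hbot _ (by nlinarith)

end Survival
-- The forcing lemma
section Forcing

lemma option_get_val_congr {K : ℕ} {o o' : Option (Fin K)} (h : o = o')
    (h1 : o.isSome) (h2 : o'.isSome) : (o.get h1).val = (o'.get h2).val := by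
  subst h; rfl

variable {n : ℕ} {d p : Fin n → ℕ} {L K : ℕ}
variable (hd : ∀ j, 0 < d j) (hp : ∀ j, p j < d j) (hdL : ∀ j, d j ∣ L)
  (hLK : L ∣ K) (hL : 0 < L) (hKL : 2 * L ≤ K)
  (hcov : ∀ t : ℕ, ∃ j, occC d p j t)

include hd hp hdL hLK hL hKL hcov

lemma forcing (hn : 1 ≤ n) {μ : Finset (List (Fin n))} (hμ : IsBP n μ)
    {x : ∀ _ : Fin n, Option (Fin K)}
    (hx1 : x ∈ limitSet (bpUpdateG (checker d p K (hK0 hd hp hdL hLK hL hKL)) μ))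
    (hx2 : x ≠ botC n K) :
    ∃ r, ∀ (τ : ℕ) (j : Fin n), j ∈ blockAt μ τ ↔ occC d p j (r + τ) := by
  have hK : 0 < K := hK0 hd hp hdL hLK hL hKL
  have hdK' : ∀ j, d j ∣ K := hdK hd hp hdL hLK hL hKL
  have hdLe' : ∀ j, d j ≤ L := hdLe hd hp hdL hLK hL hKL
  set f := checker d p K (hK0 hd hp hdL hLK hL hKL) with hf
  set c := runC f μ x with hc
  have hsome : ∀ τ j, (c τ j).isSome := survival (hK0 hd hp hdL hLK hL hKL) hμ hx1 hx2
  set U : ℕ → Fin n → ℕ := fun τ j => ((c τ j).get (hsome τ j)).val with hU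
  have hUlt : ∀ τ j, U τ j < K := fun τ j => ((c τ j).get (hsome τ j)).isLt
  -- step data
  have step : ∀ τ, ∀ i ∈ blockAt μ τ,
      U (τ+1) i = nextNC d p i (U τ i) % K ∧
      (∀ j, U τ j = lastNC d p j ((nextNC d p i (U τ i) % K) + K) % K) := by
    intro τ i hi
    have hc1 : c (τ+1) i = f i (c τ) := by
      show blockUpdateG f (blockAt μ τ) (c τ) i = f i (c τ)
      unfold blockUpdateG; rw [if_pos hi]
    have hall : ∀ j, ((c τ) j).isSome := hsome τ
    have hcval : f i (c τ) =
        if (∀ j, (((c τ) j).get (hall j)).val =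
            lastNC d p j ((nextNC d p i (((c τ) i).get (hall i)).val % K) + K) % K)
        then some ⟨nextNC d p i (((c τ) i).get (hall i)).val % K, Nat.mod_lt _ hK⟩
        else none := by
      show checker d p K (hK0 hd hp hdL hLK hL hKL) i (c τ) = _
      unfold checker
      rw [dif_pos hall]
    by_cases hcond : (∀ j, (((c τ) j).get (hall j)).val =
        lastNC d p j ((nextNC d p i (((c τ) i).get (hall i)).val % K) + K) % K)
    · rw [if_pos hcond] at hcval
      have hco : c (τ+1) i =
          some ⟨nextNC d p i (((c τ) i).get (hall i)).val % K, Nat.mod_lt _ hK⟩ :=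
        hc1.trans hcval
      constructor
      · exact option_get_val_congr hco (hsome (τ+1) i) rfl
      · exact hcond
    · rw [if_neg hcond] at hcval
      have hco : c (τ+1) i = none := hc1.trans hcval
      have := hsome (τ+1) i
      rw [hco] at this
      simp at this
  have keepc : ∀ τ, ∀ j, j ∉ blockAt μ τ → c (τ+1) j = c τ j := by
    intro τ j hj
    show blockUpdateG f (blockAt μ τ) (c τ) j = c τ j
    unfold blockUpdateG; rw [if_neg hj]
  have keepval : ∀ τ, ∀ j, j ∉ blockAt μ τ → U (τ+1) j = U τ j := by
    intro τ j hj
    exact option_get_val_congr (keepc τ j hj) (hsome (τ+1) j) (hsome τ j)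
  -- canonical updater and claimed time
  have hne : ∀ τ, (blockAt μ τ).Nonempty := fun τ => blockAt_nonempty hn hμ τ
  set v : ℕ → ℕ := fun τ =>
    nextNC d p ((blockAt μ τ).min' (hne τ)) (U τ ((blockAt μ τ).min' (hne τ))) % K with hv
  have hvlt : ∀ τ, v τ < K := fun τ => Nat.mod_lt _ hK
  have sync : ∀ τ j, U τ j = lastNC d p j (v τ + K) % K := fun τ j =>
    (step τ _ (Finset.min'_mem _ (hne τ))).2 j
  have agree : ∀ τ, ∀ i ∈ blockAt μ τ, nextNC d p i (U τ i) % K = v τ := by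
    intro τ i hi
    apply sync_inj hd hp hdL hLK hL hKL hcov hn (Nat.mod_lt _ hK) (hvlt τ)
    intro j
    rw [← (step τ i hi).2 j, sync τ j]
  have updval : ∀ τ, ∀ i ∈ blockAt μ τ, U (τ+1) i = v τ := by
    intro τ i hi; rw [(step τ i hi).1, agree τ i hi]
  have occv : ∀ τ, ∀ i ∈ blockAt μ τ, occC d p i (v τ) := by
    intro τ i hi
    have h1 : occC d p i (nextNC d p i (U τ i)) := (nextN_spec (hd i) (hp i) _).2.2.1
    rw [← agree τ i hi]
    show nextNC d p i (U τ i) % K % d i = p i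
    rw [Nat.mod_mod_of_dvd _ (hdK' i)]
    exact h1
  -- the time increment lemma
  have succv : ∀ τ, v (τ+1) = (v τ + 1) % K := by
    intro τ
    set vv := v τ with hvv
    set vv' := v (τ+1) with hvv'
    have hvlt1 : vv < K := hvlt τ
    have hvlt2 : vv' < K := hvlt (τ+1)
    set s : ℕ := if vv < vv' then vv' - vv - 1 else vv' + K - vv - 1 with hs
    set a : ℕ := vv + K with ha
    set b : ℕ := a + 1 + s with hb
    have hbeq : b = vv' + K ∨ b = vv' + 2 * K := by
      by_cases hlt : vv < vv'
      · left; rw [hb, hs, if_pos hlt]; omega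
      · right; rw [hb, hs, if_neg hlt]; omega
    have hslt : s < K := by
      rw [hs]
      by_cases hlt : vv < vv'
      · rw [if_pos hlt]; omega
      · rw [if_neg hlt]; omega
    have hgoal : s = 0 → vv' = (vv + 1) % K := by
      intro h0
      by_cases hlt : vv < vv'
      · rw [hs, if_pos hlt] at h0
        have h1 : vv' = vv + 1 := by omega
        rw [h1, Nat.mod_eq_of_lt (h1 ▸ hvlt2)]
      · rw [hs, if_neg hlt] at h0
        have h1 : vv + 1 = K := by omega
        have h2 : vv' = 0 := by omega
        rw [h2, h1, Nat.mod_self]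
    suffices hs0 : s = 0 from hgoal hs0
    by_contra hsne
    have hs1 : 1 ≤ s := by omega
    have hbmod : (vv' + K) % K = b % K := by
      rcases hbeq with h | h <;> rw [h]
      · rw [show vv' + 2 * K = vv' + K + K by ring]
        simp [Nat.add_mod_right]
    have syncb : ∀ j, U (τ+1) j = lastNC d p j b % K := by
      intro j
      rw [sync (τ+1) j]
      exact lastN_mod_congr (hd j) (hp j) hK (hdK' j) (by omega)
        (by rcases hbeq with h | h <;> omega) hbmod
    have hamod : a % K = vv := by rw [ha, Nat.add_mod_right, Nat.mod_eq_of_lt hvlt1]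
    have hupd : ∀ i ∈ blockAt μ τ, lastNC d p i b % K = vv := by
      intro i hi
      rw [← syncb i, updval τ i hi]
    have hkeep : ∀ j, j ∉ blockAt μ τ → lastNC d p j b % K = lastNC d p j a % K := by
      intro j hj
      rw [← syncb j, keepval τ j hj, sync τ j]
    have hdb : ∀ j, d j ≤ b := fun j => by have := hdLe' j; omega
    have hda : ∀ j, d j ≤ a := fun j => by have := hdLe' j; omega
    -- helper: vv' cannot be reached by a small forward jump e from vv
    have hsge_pre : K - L ≤ s → False := by
      intro hsge
      obtain ⟨i', hi'⟩ := hne (τ+1)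
      have hv' : nextNC d p i' (U (τ+1) i') % K = vv' := agree (τ+1) i' hi'
      have hcontra_e : ∀ e, 1 ≤ e → e ≤ L → vv' = (vv + e) % K → False := by
        intro e he1 heL hveq
        have hseq : s = e - 1 := by
          rcases Nat.lt_or_ge (vv + e) K with h | h
          · rw [Nat.mod_eq_of_lt h] at hveq
            have hlt : vv < vv' := by omega
            rw [hs, if_pos hlt]; omega
          · have h2K : vv + e - K < K := by omega
            have hmodeq : (vv + e) % K = vv + e - K := by
              rw [Nat.mod_eq_sub_mod h, Nat.mod_eq_of_lt h2K]
            rw [hmodeq] at hveq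
            have hlt : ¬ vv < vv' := by omega
            rw [hs, if_neg hlt]; omega
        omega
      by_cases hi'τ : i' ∈ blockAt μ τ
      · have hU1 : U (τ+1) i' = vv := updval τ i' hi'τ
        obtain ⟨hn1, hn2, hn3, hn4⟩ := nextN_spec (hd i') (hp i') vv
        refine hcontra_e (nextNC d p i' vv - vv) (by omega)
          (by have := hdLe' i'; omega) ?_
        rw [← hv', hU1]
        congr 1
        omega
      · have hU1 : U (τ+1) i' = lastNC d p i' a % K := by
          rw [keepval τ i' hi'τ, sync τ i']
        obtain ⟨ha1, ha2, ha3, ha4⟩ := lastN_spec (hd i') (hp i') (hda i')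
        set o := lastNC d p i' a with ho
        obtain ⟨hn1, hn2, hn3, hn4⟩ := nextN_spec (hd i') (hp i') o
        have hnge : a ≤ nextNC d p i' o := by
          by_contra hcon2
          exact ha4 (nextNC d p i' o) hn1 (by omega) hn3
        have hv'o : vv' = nextNC d p i' o % K := by
          rw [← hv', hU1]
          exact nextN_mod_congr (hd i') (hp i') hK (hdK' i')
            (Nat.mod_mod_of_dvd _ (dvd_refl K))
        rcases Nat.eq_or_lt_of_le hnge with heq | hlt'
        · -- nextN = a : vv' = vv, occ i' a, then b = vv + 2K gives contradiction
          have hvv'eq : vv' = vv := by rw [hv'o, ← heq, hamod]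
          have hbvv : b = vv + 2 * K := by
            rcases hbeq with h | h
            · exfalso; omega
            · omega
          obtain ⟨i₀, hi₀⟩ := hne τ
          have hlb := hupd i₀ hi₀
          obtain ⟨hc1, hc2, hc3, hc4⟩ := lastN_spec (hd i₀) (hp i₀) (hdb i₀)
          have hble : lastNC d p i₀ b ≤ vv + 2 * K := by omega
          have hmod2 : lastNC d p i₀ b % K = (vv + 2 * K) % K := by
            rw [hlb, show vv + 2 * K = vv + K + K by ring, Nat.add_mod_right,
              Nat.add_mod_right, Nat.mod_eq_of_lt hvlt1]
          have hdvd : K ∣ vv + 2 * K - lastNC d p i₀ b :=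
            (Nat.modEq_iff_dvd' hble).1 hmod2
          have hpos : 0 < vv + 2 * K - lastNC d p i₀ b := by
            have := hdLe' i₀; omega
          have := Nat.le_of_dvd hpos hdvd
          have := hdLe' i₀
          omega
        · set E := nextNC d p i' o - a with hE
          have hne' : nextNC d p i' o = vv + E + K := by omega
          refine hcontra_e E (by omega) (by have := hdLe' i'; omega) ?_
          rw [hv'o, hne', Nat.add_mod_right]
    -- main case analysis using coverage at a+1
    obtain ⟨js, hjs⟩ := hcov (a+1)
    by_cases hjsmem : js ∈ blockAt μ τ
    · obtain ⟨h1, h2, h3, h4⟩ := lastN_spec (hd js) (hp js) (hdb js)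
      have hmod : lastNC d p js b % K = a % K := by rw [hupd js hjsmem, hamod]
      have hlb : lastNC d p js b = a := by
        have hdj := hdLe' js
        rcases le_total (lastNC d p js b) a with h | h
        · have hdvd : K ∣ a - lastNC d p js b := (Nat.modEq_iff_dvd' h).1 hmod
          rcases Nat.eq_zero_or_pos (a - lastNC d p js b) with h0 | h0
          · omega
          · have := Nat.le_of_dvd h0 hdvd; omega
        · have hdvd : K ∣ lastNC d p js b - a := (Nat.modEq_iff_dvd' h).1 hmod.symm
          rcases Nat.eq_zero_or_pos (lastNC d p js b - a) with h0 | h0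
          · omega
          · have := Nat.le_of_dvd h0 hdvd; omega
      exact h4 (a+1) (by omega) (by omega) hjs
    · obtain ⟨ha1, ha2, ha3, ha4⟩ := lastN_spec (hd js) (hp js) (hda js)
      obtain ⟨hb1, hb2', hb3, hb4⟩ := lastN_spec (hd js) (hp js) (hdb js)
      have hmod : lastNC d p js b % K = lastNC d p js a % K := hkeep js hjsmem
      have hlbge : a + 1 ≤ lastNC d p js b := by
        by_contra hcon2
        exact hb4 (a+1) (by omega) (by omega) hjs
      apply hsge_pre
      have hle : lastNC d p js a ≤ lastNC d p js b := by omega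
      have hdvd : K ∣ lastNC d p js b - lastNC d p js a :=
        (Nat.modEq_iff_dvd' hle).1 hmod.symm
      have hpos : 0 < lastNC d p js b - lastNC d p js a := by omega
      have := Nat.le_of_dvd hpos hdvd
      have := hdLe' js
      omega
  -- linear time
  have vlin : ∀ τ, v τ = (v 0 + τ) % K := by
    intro τ
    induction τ with
    | zero => rw [Nat.add_zero, Nat.mod_eq_of_lt (hvlt 0)]
    | succ τ ih =>
      rw [succv τ, ih, Nat.mod_add_mod, ← Nat.add_assoc]
  -- block identification
  have blockiff : ∀ τ j, j ∈ blockAt μ τ ↔ occC d p j (v τ) := by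
    intro τ j
    constructor
    · exact occv τ j
    · intro hocc
      by_contra hj
      have h1 : U (τ+1) j = U τ j := keepval τ j hj
      have h2 : U (τ+1) j = lastNC d p j (v (τ+1) + K) % K := sync (τ+1) j
      have h3 : U τ j = lastNC d p j (v τ + K) % K := sync τ j
      have h4 : lastNC d p j (v (τ+1) + K) % K = lastNC d p j (v τ + K + 1) % K := by
        apply lastN_mod_congr (hd j) (hp j) hK (hdK' j) (by omega) (by omega)
        rw [succv τ, Nat.add_mod_right, Nat.mod_mod_of_dvd _ (dvd_refl K),
          show v τ + K + 1 = (v τ + 1) + K by ring, Nat.add_mod_right]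
      have hocca : occC d p j (v τ + K) := by
        show (v τ + K) % d j = p j
        have : (v τ + K) % d j = v τ % d j := by
          obtain ⟨k, hk⟩ := hdK' j
          rw [hk, Nat.add_mul_mod_self_left]
        rw [this]; exact hocc
      have h5 : lastNC d p j (v τ + K + 1) = v τ + K := by
        apply lastN_unique (hd j) (hp j) (by have := hdLe' j; omega) hocca (by omega)
        intro t ht1 ht2 _
        omega
      have h6 : lastNC d p j (v τ + K) % K = (v τ + K) % K := by
        calc lastNC d p j (v τ + K) % K = U τ j := h3.symm
          _ = U (τ+1) j := h1.symm
          _ = lastNC d p j (v (τ+1) + K) % K := h2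
          _ = lastNC d p j (v τ + K + 1) % K := h4
          _ = (v τ + K) % K := by rw [h5]
      exact lastN_ne_self_mod hd hp hdL hLK hL hKL j (by omega) h6
  refine ⟨v 0, fun τ j => ?_⟩
  rw [blockiff τ j, vlin τ]
  show (v 0 + τ) % K % d j = p j ↔ (v 0 + τ) % d j = p j
  rw [Nat.mod_mod_of_dvd _ (hdK' j)]

end Forcing
-- The conclusion: reconstructing the rotation
section Conclude

lemma phiBP_get {n : ℕ} (ν : Finset (List (Fin n))) (t : ℕ) (h : t < (phiBP ν).length) :
    (phiBP ν).get ⟨t, h⟩ = blockAt ν t := by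
  simp [phiBP]

lemma phiBP_length {n : ℕ} (ν : Finset (List (Fin n))) : (phiBP ν).length = bpLen ν := by
  simp [phiBP]

lemma conclude {n : ℕ} {μ μ' : Finset (List (Fin n))} (hμ : IsBP n μ)
    {d p : Fin n → ℕ}
    (hchar' : ∀ (j : Fin n) (t : ℕ), j ∈ blockAt μ' t ↔ occC d p j t)
    (hlcm' : bpLen μ' = (Finset.univ : Finset (Fin n)).lcm d)
    {r : ℕ} (H : ∀ (τ : ℕ) (j : Fin n), j ∈ blockAt μ τ ↔ occC d p j (r + τ)) :
    ∃ i, phiBP μ = (phiBP μ').rotate i := by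
  obtain ⟨D, P, hD, hP, hDl, hDchar, hlcm⟩ := isbp_full hμ
  have hDd : ∀ i, D i = d i := by
    intro i
    have hmem : ∀ τ : ℕ, τ % D i = P i ↔ (r + τ) % d i = p i := by
      intro τ
      exact (hDchar i τ).symm.trans (H τ i)
    have h0 : (P i) % D i = P i := Nat.mod_eq_of_lt (hP i)
    have h1 : (r + P i) % d i = p i := (hmem (P i)).1 h0
    have h2 : (P i + D i) % D i = P i := by rw [Nat.add_mod_right]; exact h0
    have h3 : (r + (P i + D i)) % d i = p i := (hmem _).1 h2
    have hd1 : d i ∣ D i := by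
      have he : (r + P i) % d i = (r + P i + D i) % d i := by
        rw [h1, show r + P i + D i = r + (P i + D i) by ring, h3]
      have hdvd := (Nat.modEq_iff_dvd'
        (show r + P i ≤ r + P i + D i by omega)).1 he
      rwa [Nat.add_sub_cancel_left] at hdvd
    have hd2 : D i ∣ d i := by
      have h4 : (r + (P i + d i)) % d i = p i := by
        rw [show r + (P i + d i) = (r + P i) + d i by ring, Nat.add_mod_right, h1]
      have h5 : (P i + d i) % D i = P i := (hmem _).2 h4
      have he2 : P i % D i = (P i + d i) % D i := by rw [h0, h5]
      have hdvd := (Nat.modEq_iff_dvd' (show P i ≤ P i + d i by omega)).1 he2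
      rwa [Nat.add_sub_cancel_left] at hdvd
    exact Nat.dvd_antisymm hd2 hd1
  have hDfun : D = d := funext hDd
  have hll : bpLen μ = bpLen μ' := by rw [hlcm, hlcm', hDfun]
  have hblocks : ∀ τ, blockAt μ τ = blockAt μ' (r + τ) := by
    intro τ; ext j
    rw [H τ j, hchar' j (r + τ)]
  refine ⟨r, ?_⟩
  apply List.ext_get
  · rw [List.length_rotate, phiBP_length, phiBP_length, hll]
  · intro t h1t h2t
    rw [List.get_rotate, phiBP_get, phiBP_get]
    show blockAt μ t = blockAt μ' ((t + r) % (phiBP μ').length)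
    rw [hblocks t]
    apply blockAt_congr
    rw [phiBP_length, Nat.mod_mod_of_dvd _ (dvd_refl _), Nat.add_comm r t]

end Conclude

/-- `μ ≡⋆ μ'` (i.e. `φ(μ)` is a cyclic shift of `φ(μ')`) iff for every automata
network `f` over arbitrary finite nonempty alphabets, the restrictions of
`f^⟨μ⟩` and `f^⟨μ'⟩` to their limit sets are isomorphic dynamics. -/
theorem equiv_star_iff_limit_iso (n : ℕ) (hn : 1 ≤ n) (μ μ' : Finset (List (Fin n)))
    (hμ : IsBP n μ) (hμ' : IsBP n μ') :
    (∃ i, phiBP μ = (phiBP μ').rotate i) ↔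
      ∀ (X : Fin n → Type) (_ : ∀ i, Fintype (X i)) (_ : ∀ i, Nonempty (X i))
        (f : ∀ i : Fin n, (∀ j, X j) → X i),
        ∃ π : (∀ j, X j) → (∀ j, X j),
          Set.BijOn π (limitSet (bpUpdateG f μ)) (limitSet (bpUpdateG f μ')) ∧
          ∀ x ∈ limitSet (bpUpdateG f μ),
            π (bpUpdateG f μ x) = bpUpdateG f μ' (π x) := by
  constructor
  · rintro ⟨i, h⟩ X hF _ f
    exact forward_dir μ μ' i h X hF f
  · intro H
    obtain ⟨d, p, hd, hp, hdL, hchar0, hlcm'⟩ := isbp_full hμ'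
    have hchar' : ∀ (j : Fin n) (t : ℕ), j ∈ blockAt μ' t ↔ occC d p j t :=
      fun j t => hchar0 j t
    set L := bpLen μ' with hLdef
    have hL : 0 < L := bpLen_pos hμ'
    set K := 2 * L * L with hKdef
    have hLK : L ∣ K := ⟨2 * L, by rw [hKdef]; ring⟩
    have hKL : 2 * L ≤ K := by
      have : 2 * L * 1 ≤ 2 * L * L := Nat.mul_le_mul_left _ hL
      omega
    have hcov : ∀ t : ℕ, ∃ j, occC d p j t := by
      intro t
      obtain ⟨j, hj⟩ := blockAt_nonempty hn hμ' t
      exact ⟨j, (hchar' j t).1 hj⟩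
    have hK : 0 < K := hK0 hd hp hdL hLK hL hKL
    obtain ⟨π, hbij, -⟩ := H (fun _ => Option (Fin K)) (fun _ => inferInstance)
      (fun _ => inferInstance) (checker d p K (hK0 hd hp hdL hLK hL hKL))
    have hbot' : botC n K ∈
        limitSet (bpUpdateG (checker d p K (hK0 hd hp hdL hLK hL hKL)) μ') :=
      bot_mem_limit _ μ'
    have hlam : lamC d p K (hK0 hd hp hdL hLK hL hKL) 0 ∈
        limitSet (bpUpdateG (checker d p K (hK0 hd hp hdL hLK hL hKL)) μ') :=
      lam_mem_limit hd hp hdL hLK hL hKL hchar' rfl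
    have hne2 : lamC d p K (hK0 hd hp hdL hLK hL hKL) 0 ≠ botC n K := by
      intro hcontra
      have h1 := congrFun hcontra ⟨0, hn⟩
      simp [lamC, botC] at h1
    have hcard' : 1 < (limitSet
        (bpUpdateG (checker d p K (hK0 hd hp hdL hLK hL hKL)) μ')).ncard :=
      (Set.one_lt_ncard (Set.toFinite _)).2 ⟨_, hlam, _, hbot', hne2⟩
    have hcard : 1 < (limitSet
        (bpUpdateG (checker d p K (hK0 hd hp hdL hLK hL hKL)) μ)).ncard := by
      have himg := hbij.image_eq
      have hinj := hbij.injOn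
      rw [← himg, Set.ncard_image_of_injOn hinj] at hcard'
      exact hcard'
    obtain ⟨x, hx, y, hy, hxy⟩ := (Set.one_lt_ncard (Set.toFinite _)).1 hcard
    have hz : ∃ z ∈ limitSet
        (bpUpdateG (checker d p K (hK0 hd hp hdL hLK hL hKL)) μ), z ≠ botC n K := by
      by_cases hxb : x = botC n K
      · exact ⟨y, hy, fun hyb => hxy (by rw [hxb, hyb])⟩
      · exact ⟨x, hx, hxb⟩
    obtain ⟨z, hz1, hz2⟩ := hz
    obtain ⟨r, hr⟩ := forcing hd hp hdL hLK hL hKL hcov hn hμ hz1 hz2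
    exact conclude hμ hchar' hlcm' hr
end

section
/- If μ, μ' ∈ BP_n satisfy φ(μ) = σ^{î}(φ(μ')) with φ(μ) = (W_0,…,W_{p−1}) and φ(μ') = (W'_0,…,W'_{p−1}), then for any automata network f over finite alphabets, the map π = f^{(W_{î−1})} ∘ ⋯ ∘ f^{(W_0)} restricts to a bijection from the limit set Ω_{f^{⟨μ⟩}} onto the limit set Ω_{f^{⟨μ'⟩}} satisfying π ∘ f^{⟨μ⟩} = f^{⟨μ'⟩} ∘ π on Ω_{f^{⟨μ⟩}}. -/
open Finset Nat

lemma seqUpdateG_append {n : ℕ} {X : Fin n → Type} (f : ∀ i, (∀ j, X j) → X i)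
    (A B : List (Finset (Fin n))) (x : ∀ j, X j) :
    seqUpdateG f (A ++ B) x = seqUpdateG f B (seqUpdateG f A x) :=
  List.foldl_append

section Key

variable {Y : Type} [Fintype Y]

lemma range_iterate_anti_s11 (g : Y → Y) {s t : ℕ} (hst : s ≤ t) :
    Set.range g^[t] ⊆ Set.range g^[s] := by
  obtain ⟨k, rfl⟩ := Nat.exists_eq_add_of_le hst
  rw [Function.iterate_add]
  exact Set.range_comp_subset_range _ _

lemma exists_limit_eq (g : Y → Y) :
    ∃ T, limitSet g = Set.range g^[T] ∧
      ∀ t, T ≤ t → Set.range g^[t] = Set.range g^[T] := by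
  classical
  set c : ℕ → ℕ := fun t => (Set.range g^[t]).ncard with hc
  obtain ⟨m, ⟨T, hT⟩, hmin⟩ :=
    Nat.lt_wfRel.wf.has_min (Set.range c) ⟨c 0, 0, rfl⟩
  have hstab : ∀ t, T ≤ t → Set.range g^[t] = Set.range g^[T] := by
    intro t ht
    have hsub := range_iterate_anti_s11 g ht
    have hcard : c T ≤ c t := by
      rw [hT]; exact Nat.le_of_not_lt (hmin (c t) ⟨t, rfl⟩)
    exact Set.eq_of_subset_of_ncard_le hsub hcard (Set.toFinite _)
  refine ⟨T, ?_, hstab⟩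
  apply Set.Subset.antisymm
  · exact Set.iInter_subset _ T
  · apply Set.subset_iInter
    intro t
    calc Set.range g^[T] = Set.range g^[max T t] := (hstab _ (le_max_left _ _)).symm
      _ ⊆ Set.range g^[t] := range_iterate_anti_s11 g (le_max_right _ _)

lemma bijOn_limit (g : Y → Y) : Set.BijOn g (limitSet g) (limitSet g) := by
  obtain ⟨T, hT, hstab⟩ := exists_limit_eq g
  have himg : g '' limitSet g = limitSet g := by
    rw [hT, ← Set.range_comp, ← Function.iterate_succ']
    exact hstab (T + 1) (Nat.le_succ T)
  have hmaps : Set.MapsTo g (limitSet g) (limitSet g) := by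
    intro x hx; rw [← himg]; exact ⟨x, hx, rfl⟩
  have hsurj : Set.SurjOn g (limitSet g) (limitSet g) := himg.symm.subset
  exact ((Set.toFinite _).surjOn_iff_bijOn_of_mapsTo hmaps).mp hsurj

lemma semiconj_iterate (a b : Y → Y) (t : ℕ) (x : Y) :
    a ((b ∘ a)^[t] x) = (a ∘ b)^[t] (a x) := by
  induction t generalizing x with
  | zero => rfl
  | succ t ih =>
    rw [Function.iterate_succ_apply, Function.iterate_succ_apply, ih]
    rfl

lemma mapsTo_limit (a b : Y → Y) :
    Set.MapsTo a (limitSet (b ∘ a)) (limitSet (a ∘ b)) := by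
  intro y hy
  apply Set.mem_iInter.mpr
  intro t
  obtain ⟨x, hx⟩ := Set.mem_iInter.mp hy t
  exact ⟨a x, by rw [← semiconj_iterate a b t x, hx]⟩

lemma key_bijOn (a b : Y → Y) :
    Set.BijOn a (limitSet (b ∘ a)) (limitSet (a ∘ b)) := by
  have hg := bijOn_limit (b ∘ a)
  have hg' := bijOn_limit (a ∘ b)
  refine ⟨mapsTo_limit a b, ?_, ?_⟩
  · intro x hx y hy hxy
    apply hg.injOn hx hy
    show b (a x) = b (a y)
    rw [hxy]
  · intro y hy
    obtain ⟨z, hz, hzy⟩ := hg'.surjOn hy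
    exact ⟨b z, mapsTo_limit b a hz, hzy⟩

end Key

/-- If `φ(μ) = σ^î(φ(μ'))`, i.e. `φ(μ') = φ(μ)` rotated left by `î`, then for any
automata network `f` over finite alphabets, `π = f^{(W_{î−1})} ∘ ⋯ ∘ f^{(W_0)}`
(the update of the first `î` blocks of `φ(μ)`) restricts to a bijection from the
limit set of `f^⟨μ⟩` onto that of `f^⟨μ'⟩`, conjugating the two dynamics. -/
theorem shift_conjugates_limit_dynamics (n : ℕ) (μ μ' : Finset (List (Fin n)))
    (hμ : IsBP n μ) (hμ' : IsBP n μ') (i : ℕ) (hi : i < (phiBP μ).length)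
    (hrot : phiBP μ' = (phiBP μ).rotate i)
    (X : Fin n → Type) [∀ j, Fintype (X j)] [∀ j, Nonempty (X j)]
    (f : ∀ j : Fin n, (∀ k, X k) → X j) :
    Set.BijOn (seqUpdateG f ((phiBP μ).take i))
        (limitSet (bpUpdateG f μ)) (limitSet (bpUpdateG f μ')) ∧
      ∀ x ∈ limitSet (bpUpdateG f μ),
        seqUpdateG f ((phiBP μ).take i) (bpUpdateG f μ x) =
          bpUpdateG f μ' (seqUpdateG f ((phiBP μ).take i) x) := by
  set L := phiBP μ with hLdef
  set a : (∀ j, X j) → (∀ j, X j) := seqUpdateG f (L.take i) with ha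
  set b : (∀ j, X j) → (∀ j, X j) := seqUpdateG f (L.drop i) with hb
  have hg : bpUpdateG f μ = b ∘ a := by
    funext x
    show seqUpdateG f L x = _
    conv_lhs => rw [← List.take_append_drop i L]
    rw [seqUpdateG_append]
    rfl
  have hg' : bpUpdateG f μ' = a ∘ b := by
    funext x
    show seqUpdateG f (phiBP μ') x = _
    rw [hrot, List.rotate_eq_drop_append_take (le_of_lt hi), seqUpdateG_append]
    rfl
  constructor
  · rw [hg, hg']
    exact key_bijOn a b
  · intro x _
    rw [hg, hg']
    rfl
end

section
/- For every block-parallel update schedule μ ∈ BP_n, the blocks of the sequence φ(μ) = (W_0,…,W_{ℓ−1}) are pairwise distinct; consequently the ℓ cyclic shifts σ^i(φ(μ)), for i ∈ {0,…,ℓ−1}, are pairwise distinct sequences (so the ≡_⋆-equivalence class of any element of BP_n/≡_0 generated from a partition λ of n contains exactly lcm(λ) elements). -/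
open Finset Nat

/-- The blocks of `φ(μ)` are pairwise distinct; consequently the cyclic shifts
`σ^i(φ(μ))`, `i ∈ {0,…,ℓ−1}`, are pairwise distinct sequences. -/
theorem phi_blocks_pairwise_distinct (n : ℕ) (μ : Finset (List (Fin n))) (hμ : IsBP n μ) :
    (phiBP μ).Nodup ∧
      ∀ i < (phiBP μ).length, ∀ j < (phiBP μ).length,
        (phiBP μ).rotate i = (phiBP μ).rotate j → i = j := by
  obtain ⟨hne, hcount⟩ := hμ
  -- each o-block has no duplicates
  have hnodup : ∀ S ∈ μ, S.Nodup := by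
    intro S hS
    rw [List.nodup_iff_count_le_one]
    intro a
    calc S.count a ≤ μ.sum (fun S => S.count a) :=
          Finset.single_le_sum (fun _ _ => Nat.zero_le _) hS
      _ = 1 := hcount a
  -- the o-blocks are pairwise disjoint
  have huniq : ∀ S ∈ μ, ∀ S' ∈ μ, ∀ x : Fin n, x ∈ S → x ∈ S' → S = S' := by
    intro S hS S' hS' x hx hx'
    by_contra hne'
    have h1 : 0 < S.count x := List.count_pos_iff.mpr hx
    have hmem' : S' ∈ μ.erase S := Finset.mem_erase.mpr ⟨Ne.symm hne', hS'⟩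
    have h2 : 0 < (μ.erase S).sum (fun T => T.count x) :=
      lt_of_lt_of_le (List.count_pos_iff.mpr hx')
        (Finset.single_le_sum (fun _ _ => Nat.zero_le _) hmem')
    have h3 := hcount x
    rw [← Finset.add_sum_erase μ _ hS] at h3
    omega
  -- equality of blocks forces congruence modulo every o-block length
  have hmod : ∀ s t : ℕ, blockAt μ s = blockAt μ t →
      ∀ S ∈ μ, s % S.length = t % S.length := by
    intro s t hst S hS
    have hlen : 0 < S.length := List.length_pos_iff.mpr (hne S hS)
    have hs : s % S.length < S.length := Nat.mod_lt _ hlen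
    have hx : S[s % S.length] ∈ blockAt μ s := by
      apply Finset.mem_biUnion.mpr
      exact ⟨S, hS, by simp [List.getElem?_eq_getElem hs]⟩
    rw [hst] at hx
    obtain ⟨S', hS', hx'⟩ := Finset.mem_biUnion.mp hx
    rw [Option.mem_toFinset] at hx'
    have hlt' : t % S'.length < S'.length :=
      Nat.mod_lt _ (List.length_pos_iff.mpr (hne S' hS'))
    rw [List.getElem?_eq_getElem hlt'] at hx'
    have heq : S[s % S.length] = S'[t % S'.length] := by simpa using hx'.symm
    have hSS' : S = S' :=
      huniq S hS S' hS' _ (List.getElem_mem _) (heq ▸ List.getElem_mem hlt')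
    subst hSS'
    have ht : t % S.length < S.length := Nat.mod_lt _ hlen
    exact ((hnodup S hS).getElem_inj_iff).mp heq
  -- injectivity of `blockAt` on `[0, ℓ)`
  have hinj : ∀ s < bpLen μ, ∀ t < bpLen μ, blockAt μ s = blockAt μ t → s = t := by
    have key : ∀ s t : ℕ, t ≤ s → s < bpLen μ → blockAt μ s = blockAt μ t → s = t := by
      intro s t hts hs hst
      have hd : bpLen μ ∣ s - t := by
        apply Finset.lcm_dvd
        intro S hS
        exact (Nat.modEq_iff_dvd' hts).mp (hmod s t hst S hS).symm
      have : s - t = 0 :=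
        Nat.eq_zero_of_dvd_of_lt hd (lt_of_le_of_lt (Nat.sub_le s t) hs) |>.symm ▸ rfl
      omega
    intro s hs t ht hst
    rcases le_total t s with h | h
    · exact key s t h hs hst
    · exact (key t s h ht hst.symm).symm
  constructor
  · apply List.Nodup.map_on _ List.nodup_range
    intro x hx y hy hxy
    exact hinj x (List.mem_range.mp hx) y (List.mem_range.mp hy) hxy
  · intro i hi j hj hij
    have hnd : (phiBP μ).Nodup := by
      apply List.Nodup.map_on _ List.nodup_range
      intro x hx y hy hxy
      exact hinj x (List.mem_range.mp hx) y (List.mem_range.mp hy) hxy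
    have hnil : phiBP μ ≠ [] := by
      intro h
      rw [h] at hi
      simp at hi
    have := hnd.rotate_congr hnil i j hij
    rwa [Nat.mod_eq_of_lt hi, Nat.mod_eq_of_lt hj] at this
end

section
/- For every nonempty finite set S of positive integers, defining for each j ∈ S the value a(j) = gcd(j, lcm{ k ∈ S : k > j }) (with the convention lcm(∅) = 1), one has ∏_{j ∈ S} (j / a(j)) = lcm(S); equivalently, lcm(S) · ∏_{j ∈ S} gcd(j, lcm{ k ∈ S : k > j }) = ∏_{j ∈ S} j. -/
open Finset Nat

lemma aux_lcm_mul_prod_gcd (S : Finset ℕ) :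
    S.lcm id * ∏ j ∈ S, Nat.gcd j ((S.filter fun k => j < k).lcm id) = ∏ j ∈ S, j := by
  induction S using Finset.strongInduction with
  | _ S ih =>
    rcases S.eq_empty_or_nonempty with rfl | hne
    · simp
    · set m := S.min' hne with hm
      have hmS : m ∈ S := S.min'_mem hne
      set T := S.erase m with hT
      have hmT : m ∉ T := Finset.notMem_erase _ _
      have hins : insert m T = S := Finset.insert_erase hmS
      have hTsub : T ⊂ S := Finset.erase_ssubset hmS
      have hfm : S.filter (fun k => m < k) = T := by
        ext k
        simp only [Finset.mem_filter, hT, Finset.mem_erase]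
        constructor
        · rintro ⟨hk, hlt⟩; exact ⟨Nat.ne_of_gt hlt, hk⟩
        · rintro ⟨hne', hk⟩
          exact ⟨hk, lt_of_le_of_ne (S.min'_le k hk) (Ne.symm hne')⟩
      have hfj : ∀ j ∈ T, S.filter (fun k => j < k) = T.filter (fun k => j < k) := by
        intro j hj
        rw [← hins, Finset.filter_insert]
        have : ¬ j < m := not_lt.mpr (S.min'_le j (Finset.mem_of_mem_erase hj))
        simp [this]
      set L := T.lcm id with hL
      have hprod : (∏ j ∈ S, Nat.gcd j ((S.filter fun k => j < k).lcm id))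
          = Nat.gcd m L * ∏ j ∈ T, Nat.gcd j ((T.filter fun k => j < k).lcm id) := by
        rw [← hins, Finset.prod_insert hmT, hins, hfm]
        congr 1
        refine Finset.prod_congr rfl fun j hj => ?_
        rw [hfj j hj]
      have hlcm : S.lcm id = Nat.lcm m L := by rw [← hins, Finset.lcm_insert]; rfl
      have hprodS : (∏ j ∈ S, j) = m * ∏ j ∈ T, j := by
        rw [← hins, Finset.prod_insert hmT]
      rw [hprod, hlcm, hprodS, ← ih T hTsub, ← hL]
      rw [show Nat.lcm m L * (Nat.gcd m L * ∏ j ∈ T, Nat.gcd j ((T.filter fun k => j < k).lcm id))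
            = (Nat.gcd m L * Nat.lcm m L) * ∏ j ∈ T, Nat.gcd j ((T.filter fun k => j < k).lcm id) by ring]
      rw [Nat.gcd_mul_lcm]
      ring

/-- For every nonempty finite set `S` of positive integers, with
`a(j) = gcd(j, lcm{k ∈ S : k > j})`, one has
`lcm(S) · ∏_{j ∈ S} a(j) = ∏_{j ∈ S} j` (equivalently `∏_{j∈S} (j / a(j)) = lcm S`). -/
theorem lcm_mul_prod_gcd (S : Finset ℕ) (hS : S.Nonempty) (hpos : ∀ j ∈ S, 0 < j) :
    S.lcm id * ∏ j ∈ S, Nat.gcd j ((S.filter fun k => j < k).lcm id) = ∏ j ∈ S, j :=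
  aux_lcm_mul_prod_gcd S
end

section
/- For every natural number n ≥ 2, there exists a finite set P of prime numbers, all distinct and each strictly smaller than n², such that 2^n < ∏_{p ∈ P} p < 2^{2n²}. -/
open Finset Nat

private lemma pow4_le_two_pow : ∀ n : ℕ, 16 ≤ n → n ^ 4 ≤ 2 ^ n := by
  intro n h
  induction n, h using Nat.le_induction with
  | base => norm_num
  | succ m hm ih =>
    have h16 : 16 * m ^ 3 ≤ m * m ^ 3 := Nat.mul_le_mul_right _ hm
    have h2 : (m + 1) ^ 4 ≤ 2 * m ^ 4 := by nlinarith
    calc (m + 1) ^ 4 ≤ 2 * m ^ 4 := h2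
      _ ≤ 2 * 2 ^ m := by omega
      _ = 2 ^ (m + 1) := by ring

private lemma lower_aux (n : ℕ) (hn : 16 ≤ n) :
    2 ^ n < ∏ p ∈ (Finset.range (n ^ 2)).filter Nat.Prime, p := by
  have hM : 256 ≤ n ^ 2 := by nlinarith
  set M := n ^ 2 with hMdef
  set k := (M - 1) / 2 with hk
  have hk1 : 2 * k ≤ M - 1 := by omega
  have hk2 : M - 2 ≤ 2 * k := by omega
  have hk4 : 4 ≤ k := by omega
  set s := Nat.sqrt (2 * k) with hs
  have hsn : s + 2 ≤ n + 1 := by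
    have : s < n := Nat.sqrt_lt'.mpr (by omega)
    omega
  set ν : ℕ → ℕ := fun p => (Nat.centralBinom k).factorization p with hν
  have hCeq : Nat.centralBinom k = (2 * k).choose k := rfl
  have hsplit := Finset.prod_filter_mul_prod_filter_not (Finset.range (2 * k + 1))
    (fun p => p ≤ s) (fun p => p ^ ν p)
  have hCprod := Nat.prod_pow_factorization_centralBinom k
  -- small part
  have hsmall : (∏ p ∈ (Finset.range (2 * k + 1)).filter (fun p => p ≤ s), p ^ ν p)
      ≤ (2 * k) ^ (s + 1) := by
    calc (∏ p ∈ (Finset.range (2 * k + 1)).filter (fun p => p ≤ s), p ^ ν p)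
        ≤ (2 * k) ^ ((Finset.range (2 * k + 1)).filter (fun p => p ≤ s)).card := by
          refine Finset.prod_le_pow_card _ _ _ (fun p hp => ?_)
          simpa [hν, hCeq] using Nat.pow_factorization_choose_le (n := 2 * k) (k := k) (p := p)
            (by omega)
      _ ≤ (2 * k) ^ (s + 1) := by
          refine Nat.pow_le_pow_right (by omega) ?_
          have hsub : (Finset.range (2 * k + 1)).filter (fun p => p ≤ s) ⊆ Finset.range (s + 1) := by
            intro p hp
            simp only [Finset.mem_filter, Finset.mem_range] at *
            omega
          simpa using (Finset.card_le_card hsub).trans (by simp)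
  -- large part
  have hlarge : (∏ p ∈ (Finset.range (2 * k + 1)).filter (fun p => ¬ p ≤ s), p ^ ν p)
      ≤ ∏ p ∈ (Finset.range M).filter Nat.Prime, p := by
    set A := (Finset.range (2 * k + 1)).filter (fun p => ¬ p ≤ s) with hA
    set B := A.filter (fun p => ν p ≠ 0) with hB
    have hBA : B ⊆ A := Finset.filter_subset _ _
    have heq : (∏ p ∈ A, p ^ ν p) = ∏ p ∈ B, p ^ ν p := by
      refine (Finset.prod_subset hBA ?_).symm
      intro p hpA hpB
      have hz : ν p = 0 := by
        by_contra h
        exact hpB (Finset.mem_filter.mpr ⟨hpA, h⟩)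
      simp [hz]
    have hν1 : ∀ p ∈ B, ν p = 1 := by
      intro p hp
      simp only [hB, hA, Finset.mem_filter, Finset.mem_range] at hp
      obtain ⟨⟨hpr, hps⟩, hpν⟩ := hp
      have hle : ν p ≤ 1 := by
        have hlt : 2 * k < p ^ 2 := Nat.sqrt_lt'.mp (by omega)
        simpa [hν, hCeq] using Nat.factorization_choose_le_one (n := 2 * k) (k := k) (p := p) hlt
      omega
    have hBP : B ⊆ (Finset.range M).filter Nat.Prime := by
      intro p hp
      simp only [hB, hA, Finset.mem_filter, Finset.mem_range] at hp ⊢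
      obtain ⟨⟨hpr, hps⟩, hpν⟩ := hp
      have hprime : p.Prime := Nat.prime_of_mem_primeFactors
        (by rw [← Nat.support_factorization]; exact Finsupp.mem_support_iff.mpr hpν)
      exact ⟨by omega, hprime⟩
    rw [heq]
    calc (∏ p ∈ B, p ^ ν p) = ∏ p ∈ B, p :=
          Finset.prod_congr rfl (fun p hp => by rw [hν1 p hp, pow_one])
      _ ≤ ∏ p ∈ (Finset.range M).filter Nat.Prime, p := by
          refine Finset.prod_le_prod_of_subset_of_one_le' hBP ?_
          intro p hp _
          exact ((Finset.mem_filter.mp hp).2).one_lt.le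
  -- combine: centralBinom k ≤ (2k)^(s+1) * Π
  have hC_le : Nat.centralBinom k ≤ (2 * k) ^ (s + 1) * ∏ p ∈ (Finset.range M).filter Nat.Prime, p := by
    rw [← hCprod]
    calc (∏ p ∈ Finset.range (2 * k + 1), p ^ ν p)
        = (∏ p ∈ (Finset.range (2 * k + 1)).filter (fun p => p ≤ s), p ^ ν p) *
          ∏ p ∈ (Finset.range (2 * k + 1)).filter (fun p => ¬ p ≤ s), p ^ ν p := hsplit.symm
      _ ≤ (2 * k) ^ (s + 1) * ∏ p ∈ (Finset.range M).filter Nat.Prime, p :=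
          Nat.mul_le_mul hsmall hlarge
  have hkey : 4 ^ k < (M) ^ (n + 1) * ∏ p ∈ (Finset.range M).filter Nat.Prime, p := by
    calc 4 ^ k < k * Nat.centralBinom k := Nat.four_pow_lt_mul_centralBinom k hk4
      _ ≤ (2 * k) * ((2 * k) ^ (s + 1) * ∏ p ∈ (Finset.range M).filter Nat.Prime, p) :=
          Nat.mul_le_mul (by omega) hC_le
      _ = (2 * k) ^ (s + 2) * ∏ p ∈ (Finset.range M).filter Nat.Prime, p := by ring
      _ ≤ M ^ (n + 1) * ∏ p ∈ (Finset.range M).filter Nat.Prime, p := by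
          refine Nat.mul_le_mul_right _ ?_
          calc (2 * k) ^ (s + 2) ≤ M ^ (s + 2) := Nat.pow_le_pow_left (by omega) _
            _ ≤ M ^ (n + 1) := Nat.pow_le_pow_right (by omega) hsn
  -- exponent bound: 2^n * M^(n+1) ≤ 4^k
  have hexp : 2 ^ n * M ^ (n + 1) ≤ 4 ^ k := by
    set e := (n + 2) / 2 with he
    have h2e : n + 1 ≤ 2 * e ∧ 2 * e ≤ n + 2 := by omega
    have h1 : M ^ (n + 1) ≤ (2 ^ n) ^ e := by
      calc M ^ (n + 1) ≤ M ^ (2 * e) := Nat.pow_le_pow_right (by omega) h2e.1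
        _ = (n ^ 4) ^ e := by rw [hMdef, ← pow_mul, ← pow_mul]; ring_nf
        _ ≤ (2 ^ n) ^ e := Nat.pow_le_pow_left (pow4_le_two_pow n hn) _
    have hne : n * e + n + 2 ≤ M := by
      have := h2e.2
      rw [hMdef]
      nlinarith
    calc 2 ^ n * M ^ (n + 1) ≤ 2 ^ n * (2 ^ n) ^ e := Nat.mul_le_mul_left _ h1
      _ = 2 ^ (n + n * e) := by rw [← pow_mul, ← pow_add]
      _ ≤ 2 ^ (M - 2) := Nat.pow_le_pow_right (by omega) (by omega)
      _ ≤ 2 ^ (2 * k) := Nat.pow_le_pow_right (by omega) hk2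
      _ = 4 ^ k := by rw [pow_mul]; norm_num
  -- finish
  have hfin : M ^ (n + 1) * 2 ^ n < M ^ (n + 1) * ∏ p ∈ (Finset.range M).filter Nat.Prime, p := by
    calc M ^ (n + 1) * 2 ^ n = 2 ^ n * M ^ (n + 1) := by ring
      _ ≤ 4 ^ k := hexp
      _ < M ^ (n + 1) * ∏ p ∈ (Finset.range M).filter Nat.Prime, p := hkey
  exact Nat.lt_of_mul_lt_mul_left hfin

/-- For every `n ≥ 2` there is a finite set of primes, each `< n²`, whose
product lies strictly between `2^n` and `2^(2n²)`. -/
theorem exists_primes_product_between (n : ℕ) (hn : 2 ≤ n) :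
    ∃ P : Finset ℕ, (∀ p ∈ P, Nat.Prime p ∧ p < n ^ 2) ∧
      2 ^ n < ∏ p ∈ P, p ∧ ∏ p ∈ P, p < 2 ^ (2 * n ^ 2) := by
  rcases Nat.lt_or_ge n 16 with hsmall | hbig
  · interval_cases n
    · exact ⟨{2, 3}, by decide, by decide, by decide⟩
    · exact ⟨{2, 3, 5}, by decide, by decide, by decide⟩
    · exact ⟨{2, 3, 5}, by decide, by decide, by decide⟩
    · exact ⟨{2, 3, 5, 7}, by decide, by decide, by decide⟩
    · exact ⟨{2, 3, 5, 7}, by decide, by decide, by decide⟩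
    · exact ⟨{2, 3, 5, 7}, by decide, by decide, by decide⟩
    · exact ⟨{2, 3, 5, 7, 11}, by decide, by decide, by decide⟩
    · exact ⟨{2, 3, 5, 7, 11}, by decide, by decide, by decide⟩
    · exact ⟨{2, 3, 5, 7, 11}, by decide, by decide, by decide⟩
    · exact ⟨{2, 3, 5, 7, 11}, by decide, by decide, by decide⟩
    · exact ⟨{2, 3, 5, 7, 11, 13}, by decide, by decide, by decide⟩
    · exact ⟨{2, 3, 5, 7, 11, 13}, by decide, by decide, by decide⟩
    · exact ⟨{2, 3, 5, 7, 11, 13}, by decide, by decide, by decide⟩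
    · exact ⟨{2, 3, 5, 7, 11, 13, 17}, by decide, by decide, by decide⟩
  · refine ⟨(Finset.range (n ^ 2)).filter Nat.Prime, ?_, ?_, ?_⟩
    · intro p hp
      rw [Finset.mem_filter, Finset.mem_range] at hp
      exact ⟨hp.2, hp.1⟩
    · exact lower_aux n hbig
    · have h4 : 4 ≤ n ^ 2 := by nlinarith
      have he : n ^ 2 - 1 + 1 = n ^ 2 := by omega
      calc (∏ p ∈ (Finset.range (n ^ 2)).filter Nat.Prime, p)
          = primorial (n ^ 2 - 1) := by rw [primorial, he]
        _ ≤ 4 ^ (n ^ 2 - 1) := primorial_le_4_pow _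
        _ < 4 ^ (n ^ 2) := Nat.pow_lt_pow_right (by norm_num) (by omega)
        _ = 2 ^ (2 * n ^ 2) := by rw [pow_mul]; norm_num
end

section
/- For every natural number n ≥ 2, there exist a natural number N ≤ n⁴ and a block-parallel update schedule μ ∈ BP_N such that the number of substeps |φ(μ)|, i.e., the least common multiple of the lengths of the o-blocks of μ, is strictly greater than 2^n. -/
open Finset Nat

/-- Triangular numbers: `tri m = 0 + 1 + ⋯ + m`. -/
def tri : ℕ → ℕ
  | 0 => 0
  | j + 1 => tri j + (j + 1)

lemma tri_succ (j : ℕ) : tri (j + 1) = tri j + (j + 1) := rfl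

lemma tri_mono : Monotone tri :=
  monotone_nat_of_le_succ fun j => Nat.le_add_right _ _

lemma two_mul_tri (m : ℕ) : 2 * tri m = m * (m + 1) := by
  induction m with
  | zero => rfl
  | succ j ih => rw [tri_succ, Nat.mul_add, ih]; ring

/-- The intervals `[tri j, tri (j+1))` for `j < m` partition `[0, tri m)`. -/
lemma tri_partition (m v : ℕ) (hv : v < tri m) :
    (∑ j ∈ Finset.range m, if tri j ≤ v ∧ v < tri j + (j + 1) then 1 else 0) = 1 := by
  induction m with
  | zero => simp [tri] at hv
  | succ m ih =>
    rw [Finset.sum_range_succ]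
    by_cases h : v < tri m
    · rw [ih h, if_neg, Nat.add_zero]
      rintro ⟨h1, -⟩; omega
    · have h1 : tri m ≤ v := le_of_not_gt h
      have h2 : v < tri m + (m + 1) := by rw [← tri_succ]; exact hv
      rw [if_pos ⟨h1, h2⟩, Finset.sum_eq_zero]
      intro j hj
      rw [if_neg]
      rintro ⟨-, h4⟩
      have : tri (j + 1) ≤ tri m := tri_mono (Finset.mem_range.mp hj)
      rw [tri_succ] at this
      omega

lemma two_pow_lt_centralBinom : ∀ m, 2 ≤ m → 2 ^ m < Nat.centralBinom m := by
  intro m hm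
  induction m, hm using Nat.le_induction with
  | base => decide
  | succ m hm ih =>
    have h1 := Nat.succ_mul_centralBinom_succ m
    have h2 : 2 * Nat.centralBinom m ≤ Nat.centralBinom (m + 1) := by
      have h3 : (m + 1) * (2 * Nat.centralBinom m) ≤ (m + 1) * Nat.centralBinom (m + 1) := by
        nlinarith [Nat.centralBinom_pos m]
      exact Nat.le_of_mul_le_mul_left h3 (Nat.succ_pos m)
    calc 2 ^ (m + 1) = 2 * 2 ^ m := by ring
    _ < 2 * Nat.centralBinom m := by omega
    _ ≤ Nat.centralBinom (m + 1) := h2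

lemma centralBinom_dvd_lcm (n : ℕ) (hn : 1 ≤ n) :
    Nat.centralBinom n ∣ (Finset.range (2 * n)).lcm (fun j => j + 1) := by
  set L := (Finset.range (2 * n)).lcm (fun j => j + 1) with hL
  have hL0 : L ≠ 0 := by
    intro h0
    rw [hL, Finset.lcm_eq_zero_iff] at h0
    obtain ⟨j, -, hj⟩ := h0
    simp at hj
  rw [← Nat.factorization_le_iff_dvd (Nat.centralBinom_ne_zero n) hL0, Finsupp.le_def]
  intro p
  by_cases hp : p.Prime
  · have he : (Nat.centralBinom n).factorization p ≤ Nat.log p (2 * n) := by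
      rw [Nat.centralBinom]
      exact Nat.factorization_choose_le_log
    set q := p ^ Nat.log p (2 * n) with hq
    have hq1 : 1 ≤ q := Nat.one_le_pow _ _ hp.pos
    have hq2 : q ≤ 2 * n := Nat.pow_log_le_self p (by omega)
    have hqL : q ∣ L := by
      have hmem : q - 1 ∈ Finset.range (2 * n) := Finset.mem_range.mpr (by omega)
      have := Finset.dvd_lcm (f := fun j => j + 1) hmem
      simpa [Nat.sub_add_cancel hq1] using this
    have hdvd : p ^ (Nat.centralBinom n).factorization p ∣ L :=
      dvd_trans (pow_dvd_pow p he) hqL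
    exact (Nat.Prime.pow_dvd_iff_le_factorization hp hL0).mp hdvd
  · simp [Nat.factorization_eq_zero_of_not_prime _ hp]

/-- An element of `Fin N` from a natural number, by reduction mod `N`. -/
def finMk (N : ℕ) (h : 0 < N) (m : ℕ) : Fin N := ⟨m % N, Nat.mod_lt _ h⟩

@[simp] lemma finMk_val (N : ℕ) (h : 0 < N) (m : ℕ) : (finMk N h m : ℕ) = m % N := rfl

/-- For every `n ≥ 2` there exist `N ≤ n⁴` and a block-parallel update schedule
`μ ∈ BP_N` whose number of substeps `|φ(μ)|` (the lcm of the o-block lengths)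
is strictly greater than `2^n`. -/
theorem exists_bp_many_substeps (n : ℕ) (hn : 2 ≤ n) :
    ∃ N ≤ n ^ 4, ∃ μ : Finset (List (Fin N)), IsBP N μ ∧ 2 ^ n < bpLen μ := by
  set N := tri (2 * n) with hNdef
  have hNtri := two_mul_tri (2 * n)
  have hNpos : 0 < N := by
    rw [hNdef]
    have : tri 1 ≤ tri (2 * n) := tri_mono (by omega)
    simp [tri] at this; omega
  set B : ℕ → List (Fin N) := fun j => (List.range' (tri j) (j + 1)).map (finMk N hNpos)
    with hB
  have hlen : ∀ j, (B j).length = j + 1 := by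
    intro j; simp [hB]
  have hsub : ∀ j, j < 2 * n → tri j + (j + 1) ≤ N := by
    intro j hj
    have := tri_mono (show j + 1 ≤ 2 * n by omega)
    rw [tri_succ] at this
    exact this
  have hinj : ∀ x ∈ Finset.range (2 * n), ∀ y ∈ Finset.range (2 * n), B x = B y → x = y := by
    intro x _ y _ hxy
    have := congrArg List.length hxy
    rw [hlen, hlen] at this
    omega
  refine ⟨N, ?_, (Finset.range (2 * n)).image B, ⟨?_, ?_⟩, ?_⟩
  · -- N ≤ n ^ 4
    have h0 : 4 ≤ n * n := Nat.mul_le_mul hn hn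
    have h1 : 2 * n + 1 ≤ n ^ 3 := by nlinarith
    have h2 : 2 * n * (2 * n + 1) ≤ 2 * n ^ 4 := by
      calc 2 * n * (2 * n + 1) ≤ 2 * n * n ^ 3 := Nat.mul_le_mul_left _ h1
      _ = 2 * n ^ 4 := by ring
    have h3 : 2 * N ≤ 2 * n ^ 4 := by
      rw [show (2 : ℕ) * N = 2 * n * (2 * n + 1) from hNtri]; exact h2
    exact Nat.le_of_mul_le_mul_left h3 two_pos
  · -- nonempty blocks
    intro S hS
    obtain ⟨j, -, rfl⟩ := Finset.mem_image.mp hS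
    intro hnil
    have := hlen j
    rw [hnil] at this
    simp at this
  · -- counting
    intro i
    rw [Finset.sum_image hinj]
    have hcount : ∀ j ∈ Finset.range (2 * n),
        (B j).count i = if tri j ≤ (i : ℕ) ∧ (i : ℕ) < tri j + (j + 1) then 1 else 0 := by
      intro j hj
      have hj' := Finset.mem_range.mp hj
      have hnd : (B j).Nodup := by
        refine List.Nodup.map_on ?_ (List.nodup_range' (s := tri j) (n := j + 1))
        intro a ha b hb hab
        have ha' : a < N := by
          have := (List.mem_range'_1.mp ha).2
          have := hsub j hj'
          omega
        have hb' : b < N := by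
          have := (List.mem_range'_1.mp hb).2
          have := hsub j hj'
          omega
        have hv : a % N = b % N := by
          have := congrArg Fin.val hab
          simpa [finMk_val] using this
        rwa [Nat.mod_eq_of_lt ha', Nat.mod_eq_of_lt hb'] at hv
      have hmem : i ∈ B j ↔ tri j ≤ (i : ℕ) ∧ (i : ℕ) < tri j + (j + 1) := by
        rw [hB]
        simp only [List.mem_map, List.mem_range'_1]
        constructor
        · rintro ⟨m, ⟨hm1, hm2⟩, rfl⟩
          have hm' : m < N := by have := hsub j hj'; omega
          rw [finMk_val, Nat.mod_eq_of_lt hm']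
          exact ⟨hm1, hm2⟩
        · rintro ⟨h1, h2⟩
          refine ⟨(i : ℕ), ⟨h1, h2⟩, ?_⟩
          apply Fin.ext
          rw [finMk_val]
          exact Nat.mod_eq_of_lt i.isLt
      by_cases hmi : i ∈ B j
      · rw [if_pos (hmem.mp hmi)]
        exact List.count_eq_one_of_mem hnd hmi
      · rw [if_neg (fun hc => hmi (hmem.mpr hc))]
        exact List.count_eq_zero_of_not_mem hmi
    rw [Finset.sum_congr rfl hcount]
    exact tri_partition (2 * n) (i : ℕ) i.isLt
  · -- the lcm bound
    rw [bpLen, Finset.lcm_image]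
    have heq : ((Finset.range (2 * n)).lcm fun j => (B j).length)
        = (Finset.range (2 * n)).lcm (fun j => j + 1) :=
      Finset.lcm_congr rfl (fun j _ => hlen j)
    have hLpos : 0 < (Finset.range (2 * n)).lcm (fun j => j + 1) := by
      rcases Nat.eq_zero_or_pos ((Finset.range (2 * n)).lcm (fun j => j + 1)) with h0 | h
      · rw [Finset.lcm_eq_zero_iff] at h0
        obtain ⟨j, -, hj⟩ := h0
        simp at hj
      · exact h
    calc 2 ^ n < Nat.centralBinom n := two_pow_lt_centralBinom n hn
    _ ≤ (Finset.range (2 * n)).lcm (fun j => j + 1) :=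
        Nat.le_of_dvd hLpos (centralBinom_dvd_lcm n (by omega))
    _ = Finset.lcm (Finset.range (2 * n)) (List.length ∘ B) := heq.symm
end
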